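/- arXiv:1202.5205 — 9 statements merged into one kernel-verified Lean document; each statement's English description precedes it below -/
import Mathlib

section
/- Let H₁ and H₂ be separable real Hilbert spaces, let A : H₂ → H₁ be a bounded linear operator such that K := A ∘ A* is trace class (equivalently, A is Hilbert–Schmidt), and let R : H₂ → H₂ be an orthogonal projection. Then K* := A ∘ R ∘ A* is a positive, trace-class operator on H₁, and tr(K*) ≤ tr(K). -/
open scoped RealInnerProductSpace

/-- Theorem 1, part (1), abstract form. Let `H₁`, `H₂` be separable real
Hilbert spaces, `A : H₂ → H₁` bounded linear such that `K := A ∘ A*` is trace class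
(equivalently, `A*` — hence `A` — is Hilbert–Schmidt, expressed via summability of
`‖A* (e i)‖²` over a Hilbert basis `e` of `H₁`), and let `R : H₂ → H₂` be an orthogonal
projection (bounded, self-adjoint, idempotent). Then `K* := A ∘ R ∘ A*` is a positive,
trace-class operator on `H₁`, and `tr(K*) ≤ tr(K)`, traces being computed as the sum of
diagonal inner products in the Hilbert basis `e`. -/
theorem stmt1 {H₁ H₂ : Type*}
    [NormedAddCommGroup H₁] [InnerProductSpace ℝ H₁] [CompleteSpace H₁]
    [NormedAddCommGroup H₂] [InnerProductSpace ℝ H₂] [CompleteSpace H₂]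
    [TopologicalSpace.SeparableSpace H₁] [TopologicalSpace.SeparableSpace H₂]
    {ι : Type*} [Countable ι] (e : HilbertBasis ι ℝ H₁)
    (A : H₂ →L[ℝ] H₁)
    (htc : Summable fun i => ‖ContinuousLinearMap.adjoint A (e i)‖ ^ 2)
    (R : H₂ →L[ℝ] H₂)
    (hR_sa : ContinuousLinearMap.adjoint R = R) (hR_idem : R ∘L R = R) :
    (∀ v : H₁, 0 ≤ ⟪(A ∘L R ∘L ContinuousLinearMap.adjoint A) v, v⟫) ∧
    Summable (fun i => ⟪(A ∘L R ∘L ContinuousLinearMap.adjoint A) (e i), e i⟫) ∧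
    ∑' i, ⟪(A ∘L R ∘L ContinuousLinearMap.adjoint A) (e i), e i⟫
      ≤ ∑' i, ⟪(A ∘L ContinuousLinearMap.adjoint A) (e i), e i⟫ := by
  classical
  have hRx : ∀ x : H₂, ⟪R x, x⟫ = ‖R x‖ ^ 2 := by
    intro x
    have h2 : R (R x) = R x := by
      have := congrArg (fun T : H₂ →L[ℝ] H₂ => T x) hR_idem
      simpa using this
    calc ⟪R x, x⟫ = ⟪R (R x), x⟫ := by rw [h2]
      _ = ⟪R x, R x⟫ := by
          have h := ContinuousLinearMap.adjoint_inner_left R (R x) x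
          rw [hR_sa] at h
          rw [real_inner_comm]
          exact h.symm
      _ = ‖R x‖ ^ 2 := by rw [real_inner_self_eq_norm_sq]
  have hdiag : ∀ v : H₁,
      ⟪(A ∘L R ∘L ContinuousLinearMap.adjoint A) v, v⟫
        = ‖R (ContinuousLinearMap.adjoint A v)‖ ^ 2 := by
    intro v
    have : ⟪(A ∘L R ∘L ContinuousLinearMap.adjoint A) v, v⟫
        = ⟪R (ContinuousLinearMap.adjoint A v), ContinuousLinearMap.adjoint A v⟫ := by
      simp only [ContinuousLinearMap.comp_apply]
      rw [← ContinuousLinearMap.adjoint_inner_right A]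
    rw [this, hRx]
  have hpos : ∀ v : H₁, 0 ≤ ⟪(A ∘L R ∘L ContinuousLinearMap.adjoint A) v, v⟫ := by
    intro v; rw [hdiag]; positivity
  have hle : ∀ v : H₁,
      ⟪(A ∘L R ∘L ContinuousLinearMap.adjoint A) v, v⟫
        ≤ ‖ContinuousLinearMap.adjoint A v‖ ^ 2 := by
    intro v
    rw [hdiag]
    have hn : ‖R (ContinuousLinearMap.adjoint A v)‖ ≤ ‖ContinuousLinearMap.adjoint A v‖ := by
      set x := ContinuousLinearMap.adjoint A v
      by_cases h0 : ‖R x‖ = 0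
      · rw [h0]; positivity
      · have hcs : ⟪R x, x⟫ ≤ ‖R x‖ * ‖x‖ := real_inner_le_norm _ _
        have := hRx x
        nlinarith [norm_nonneg (R x), norm_nonneg x]
    have := sq_le_sq' (by linarith [norm_nonneg (R (ContinuousLinearMap.adjoint A v))]) hn
    simpa using this
  have hsum : Summable (fun i => ⟪(A ∘L R ∘L ContinuousLinearMap.adjoint A) (e i), e i⟫) :=
    Summable.of_nonneg_of_le (fun i => hpos (e i)) (fun i => hle (e i)) htc
  refine ⟨hpos, hsum, ?_⟩
  have hdiagK : ∀ i, ⟪(A ∘L ContinuousLinearMap.adjoint A) (e i), e i⟫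
      = ‖ContinuousLinearMap.adjoint A (e i)‖ ^ 2 := by
    intro i
    rw [ContinuousLinearMap.comp_apply, ← ContinuousLinearMap.adjoint_inner_right A,
      real_inner_self_eq_norm_sq]
  have hsumK : Summable (fun i => ⟪(A ∘L ContinuousLinearMap.adjoint A) (e i), e i⟫) := by
    simp only [hdiagK]; exact htc
  exact Summable.tsum_le_tsum (fun i => by rw [hdiagK]; exact hle (e i)) hsum hsumK
end

section
/- Let H₁ and H₂ be separable real Hilbert spaces, let A : H₂ → H₁ be a nonzero bounded linear operator such that A ∘ A* is trace class, with singular value decomposition given by orthonormal families (gᵢ) in H₁ and (hᵢ) in H₂ and singular values β₁ ≥ β₂ ≥ ⋯ ≥ 0 satisfying A hᵢ = βᵢ gᵢ and A* gᵢ = βᵢ hᵢ, and let R : H₂ → H₂ be an orthogonal projection. Then tr(A ∘ R ∘ A*) = tr(A ∘ A*) if and only if R hᵢ = hᵢ for every index i with βᵢ > 0. -/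
open scoped RealInnerProductSpace

section Aux

variable {H : Type*} [NormedAddCommGroup H] [InnerProductSpace ℝ H] [CompleteSpace H]

private lemma proj_inner (R : H →L[ℝ] H)
    (hR_sa : ContinuousLinearMap.adjoint R = R) (hR_idem : R ∘L R = R) (w : H) :
    ⟪R w, w⟫ = ‖R w‖ ^ 2 := by
  have h2 : R (R w) = R w := by
    have := congrArg (fun T : H →L[ℝ] H => T w) hR_idem
    simpa using this
  have h1 : ⟪R w, R w⟫ = ⟪w, R w⟫ := by
    nth_rewrite 1 [← hR_sa]
    rw [ContinuousLinearMap.adjoint_inner_left, h2]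
  rw [← real_inner_self_eq_norm_sq, h1, real_inner_comm]

private lemma proj_norm_sub (R : H →L[ℝ] H)
    (hR_sa : ContinuousLinearMap.adjoint R = R) (hR_idem : R ∘L R = R) (w : H) :
    ‖w - R w‖ ^ 2 = ‖w‖ ^ 2 - ‖R w‖ ^ 2 := by
  have h1 : ⟪w, R w⟫ = ‖R w‖ ^ 2 := by
    rw [real_inner_comm]; exact proj_inner R hR_sa hR_idem w
  rw [@norm_sub_sq_real, h1]; ring

/-- Representation of a vector orthogonal to everything orthogonal to all `h i`,
as a sum over the orthonormal family `h`. -/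
private lemma rep {h : ℕ → H} (hh : Orthonormal ℝ h) (w : H)
    (hw : ∀ v, (∀ i, ⟪h i, v⟫ = 0) → ⟪v, w⟫ = 0) :
    HasSum (fun i => ⟪h i, w⟫ • h i) w := by
  classical
  have hsummable : Summable fun i => ⟪h i, w⟫ • h i := by
    have := (hh.orthogonalFamily.summable_iff_norm_sq_summable
      (fun i => (⟪h i, w⟫ : ℝ))).2 (by simpa using hh.inner_products_summable w)
    simpa [LinearIsometry.toSpanSingleton_apply] using this
  obtain ⟨w', hw'⟩ := hsummable
  have hcoeff : ∀ j, ⟪h j, w'⟫ = ⟪h j, w⟫ := by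
    intro j
    have h1 : HasSum (fun i => ⟪h j, ⟪h i, w⟫ • h i⟫) ⟪h j, w'⟫ :=
      hw'.mapL (innerSL ℝ (h j))
    have h2 : (fun i => ⟪h j, ⟪h i, w⟫ • h i⟫)
        = fun i => if i = j then ⟪h j, w⟫ else 0 := by
      funext i
      rcases eq_or_ne i j with rfl | hij
      · simp [real_inner_smul_right, hh.inner_left_right_finset]
        simp [real_inner_self_eq_norm_sq, hh.1 i]
      · simp [real_inner_smul_right, hh.2 (Ne.symm hij), hij]
    rw [h2] at h1
    exact h1.unique (hasSum_ite_eq j _)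
  have hv : ∀ i, ⟪h i, w - w'⟫ = 0 := by
    intro i; rw [inner_sub_right, hcoeff]; ring
  have h3 : ⟪w - w', w⟫ = 0 := hw _ hv
  have h4 : ⟪w - w', w'⟫ = 0 := by
    have h1 : HasSum (fun i => ⟪w - w', ⟪h i, w⟫ • h i⟫) ⟪w - w', w'⟫ :=
      hw'.mapL (innerSL ℝ (w - w'))
    have h2 : (fun i => ⟪w - w', ⟪h i, w⟫ • h i⟫) = fun _ => (0 : ℝ) := by
      funext i
      have h0 : ⟪w - w', h i⟫ = 0 := by rw [real_inner_comm]; exact hv i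
      rw [real_inner_smul_right, h0, mul_zero]
    rw [h2] at h1
    exact h1.unique hasSum_zero
  have h5 : w - w' = 0 := by
    have : ⟪w - w', w - w'⟫ = (0 : ℝ) := by
      rw [inner_sub_right, h3, h4]; ring
    exact inner_self_eq_zero.1 this
  have : w = w' := by rwa [sub_eq_zero] at h5
  rwa [← this] at hw'

end Aux

/-- Theorem 1, part (3), abstract form. Let `H₁`, `H₂` be separable real
Hilbert spaces and `A : H₂ → H₁` a nonzero bounded linear operator such that `A ∘ A*` is
trace class, with singular value decomposition given by orthonormal families `(g i)` in `H₁`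
and `(h i)` in `H₂` and nonincreasing singular values `β i ≥ 0` satisfying
`A (h i) = β i • g i` and `A* (g i) = β i • h i`, with `A` vanishing on the orthogonal
complement of the span of the `h i`.  Let `R : H₂ → H₂` be an orthogonal projection.  Then
`tr(A ∘ R ∘ A*) = tr(A ∘ A*)` (traces computed over a Hilbert basis `e` of `H₁`) if and only
if `R (h i) = h i` for every index `i` with `β i > 0`. -/
theorem stmt3 {H₁ H₂ : Type*}
    [NormedAddCommGroup H₁] [InnerProductSpace ℝ H₁] [CompleteSpace H₁]
    [NormedAddCommGroup H₂] [InnerProductSpace ℝ H₂] [CompleteSpace H₂]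
    [TopologicalSpace.SeparableSpace H₁] [TopologicalSpace.SeparableSpace H₂]
    {ι : Type*} [Countable ι] (e : HilbertBasis ι ℝ H₁)
    (A : H₂ →L[ℝ] H₁) (hA_ne : A ≠ 0)
    (g : ℕ → H₁) (h : ℕ → H₂) (hg_on : Orthonormal ℝ g) (hh_on : Orthonormal ℝ h)
    (β : ℕ → ℝ) (hβ_anti : Antitone β) (hβ_nonneg : ∀ i, 0 ≤ β i)
    (hAh : ∀ i, A (h i) = β i • g i)
    (hAg : ∀ i, ContinuousLinearMap.adjoint A (g i) = β i • h i)
    (hA_van : ∀ v : H₂, (∀ i, ⟪h i, v⟫ = 0) → A v = 0)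
    (htc : Summable fun j => ‖ContinuousLinearMap.adjoint A (e j)‖ ^ 2)
    (R : H₂ →L[ℝ] H₂)
    (hR_sa : ContinuousLinearMap.adjoint R = R) (hR_idem : R ∘L R = R) :
    (∑' j, ⟪(A ∘L R ∘L ContinuousLinearMap.adjoint A) (e j), e j⟫
        = ∑' j, ⟪(A ∘L ContinuousLinearMap.adjoint A) (e j), e j⟫)
      ↔ ∀ i, 0 < β i → R (h i) = h i := by
  classical
  set B := ContinuousLinearMap.adjoint A with hB
  -- rewrite the two traces as sums of squared norms
  have hL : ∀ j, ⟪(A ∘L R ∘L B) (e j), e j⟫ = ‖R (B (e j))‖ ^ 2 := by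
    intro j
    rw [ContinuousLinearMap.comp_apply, ContinuousLinearMap.comp_apply,
      ← ContinuousLinearMap.adjoint_inner_right, ← hB,
      proj_inner R hR_sa hR_idem]
  have hRHS : ∀ j, ⟪(A ∘L B) (e j), e j⟫ = ‖B (e j)‖ ^ 2 := by
    intro j
    rw [ContinuousLinearMap.comp_apply,
      ← ContinuousLinearMap.adjoint_inner_right, ← hB,
      real_inner_self_eq_norm_sq]
  rw [tsum_congr hL, tsum_congr hRHS]
  have hle : ∀ j, ‖R (B (e j))‖ ^ 2 ≤ ‖B (e j)‖ ^ 2 := by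
    intro j
    have := proj_norm_sub R hR_sa hR_idem (B (e j))
    nlinarith [sq_nonneg ‖B (e j) - R (B (e j))‖]
  -- the trace equality holds iff `R` fixes every `B (e j)`
  have key : (∑' j, ‖R (B (e j))‖ ^ 2 = ∑' j, ‖B (e j)‖ ^ 2)
      ↔ ∀ j, R (B (e j)) = B (e j) := by
    constructor
    · intro heq j
      by_contra hne
      have hlt : ‖R (B (e j))‖ ^ 2 < ‖B (e j)‖ ^ 2 := by
        have h1 := proj_norm_sub R hR_sa hR_idem (B (e j))
        have h2 : B (e j) - R (B (e j)) ≠ 0 := sub_ne_zero.2 (Ne.symm hne)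
        have h3 : 0 < ‖B (e j) - R (B (e j))‖ ^ 2 :=
          pow_pos (norm_pos_iff.mpr h2) 2
        linarith
      have : (∑' j, ‖R (B (e j))‖ ^ 2) < ∑' j, ‖B (e j)‖ ^ 2 :=
        Summable.tsum_lt_tsum hle hlt
          (Summable.of_nonneg_of_le (fun j => sq_nonneg _) hle htc) htc
      exact absurd heq (ne_of_lt this)
    · intro hfix
      exact tsum_congr fun j => by rw [hfix j]
  rw [key]
  constructor
  · -- if R fixes every B (e j), then R fixes every h i with β i > 0
    intro hfix i hβi
    have h1 : HasSum (fun j => e.repr (g i) j • e j) (g i) := e.hasSum_repr (g i)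
    have h2 : HasSum (fun j => e.repr (g i) j • B (e j)) (β i • h i) := by
      have := B.hasSum h1
      simpa [map_smul, hAg i] using this
    have h3 : HasSum (fun j => e.repr (g i) j • B (e j)) (R (β i • h i)) := by
      have := R.hasSum h2
      simpa [map_smul, hfix] using this
    have h4 : R (β i • h i) = β i • h i := h3.unique h2
    have h5 : β i • R (h i) = β i • h i := by rwa [map_smul] at h4
    exact smul_right_injective H₂ (ne_of_gt hβi) h5
  · -- conversely, each B (e j) is fixed by R
    intro hfix j
    have hw : ∀ v, (∀ i, ⟪h i, v⟫ = 0) → ⟪v, B (e j)⟫ = 0 := by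
      intro v hv
      rw [hB, ContinuousLinearMap.adjoint_inner_right, hA_van v hv,
        inner_zero_left]
    have h1 : HasSum (fun i => ⟪h i, B (e j)⟫ • h i) (B (e j)) := rep hh_on _ hw
    have h2 : HasSum (fun i => ⟪h i, B (e j)⟫ • R (h i)) (R (B (e j))) := by
      have := R.hasSum h1
      simpa [map_smul] using this
    have h3 : (fun i => ⟪h i, B (e j)⟫ • R (h i))
        = fun i => ⟪h i, B (e j)⟫ • h i := by
      funext i
      rcases (hβ_nonneg i).lt_or_eq with hpos | hzero
      · rw [hfix i hpos]
      · have hcoeff : ⟪h i, B (e j)⟫ = 0 := by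
          rw [hB, ContinuousLinearMap.adjoint_inner_right, hAh i, ← hzero,
            zero_smul, inner_zero_left]
        rw [hcoeff, zero_smul, zero_smul]
    rw [h3] at h2
    exact h2.unique h1
end

section
/- Let H₁ and H₂ be separable real Hilbert spaces, let A : H₂ → H₁ be a bounded linear operator such that A ∘ A* is trace class, with singular value decomposition given by orthonormal families (gᵢ) in H₁ and (hᵢ) in H₂ and singular values β₁ ≥ β₂ ≥ ⋯ ≥ 0 satisfying A hᵢ = βᵢ gᵢ and A* gᵢ = βᵢ hᵢ, and assume β₁ > 0. Let R : H₂ → H₂ be an orthogonal projection, and let l := max{ i : βᵢ = β₁ } (which is finite since ∑ᵢ βᵢ² < ∞). Then ‖A ∘ R ∘ A*‖ < ‖A ∘ A*‖ if and only if the only vector (a₁, …, a_l) ∈ ℝ^l satisfying R(∑_{i=1}^{l} aᵢ hᵢ) = ∑_{i=1}^{l} aᵢ hᵢ is the zero vector. -/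
open scoped RealInnerProductSpace

private lemma stmt4_quad (e f c s t : ℝ) (he : 0 < e) (hef : c^2 ≤ e*f) :
    2*c*(s*t) ≤ e*s^2 + f*t^2 := by
  nlinarith [sq_nonneg (e*s - c*t), mul_nonneg (sub_nonneg.mpr hef) (sq_nonneg t)]

set_option maxHeartbeats 1000000 in
private lemma stmt4_key_ineq (b b' d s q w : ℝ) (hb : 0 < b) (hb'0 : 0 ≤ b') (hb' : b' < b)
    (hd : 0 < d) (hd1 : d ≤ 1) (hs : 0 ≤ s) (hs1 : s ≤ 1) (hq : 0 ≤ q) (hw : 0 ≤ w)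
    (hq2 : q ^ 2 ≤ b' ^ 2 * (1 - s ^ 2)) (hw2 : d * (b * s) - q ≤ w) :
    (b * s) ^ 2 + q ^ 2 - w ^ 2 ≤ b ^ 2 - d ^ 2 * (b ^ 2 - b' ^ 2) / 2 := by
  have hd2 : d^2 ≤ 1 := by nlinarith
  have hbb' : (0:ℝ) ≤ b^2 - b'^2 := by nlinarith
  rcases le_or_gt q (d * (b * s)) with hcase | hcase
  · set t := Real.sqrt (1 - s ^ 2) with ht
    have h1s : (0:ℝ) ≤ 1 - s ^ 2 := by nlinarith
    have ht2 : t ^ 2 = 1 - s ^ 2 := Real.sq_sqrt h1s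
    have ht0 : 0 ≤ t := Real.sqrt_nonneg _
    have hqt : q ≤ b' * t := by
      nlinarith [mul_nonneg hb'0 ht0]
    have hw' : (d * (b * s) - q) ^ 2 ≤ w ^ 2 := by
      have h0 : 0 ≤ d * (b * s) - q := by linarith
      nlinarith
    have hV1 : (b * s) ^ 2 + q ^ 2 - w ^ 2 ≤ (1 - d^2) * (b*s)^2 + 2*d*(b*s)*q := by
      nlinarith [hw']
    have hV2 : (1 - d^2) * (b*s)^2 + 2*d*(b*s)*q ≤ (1-d^2)*b^2*s^2 + 2*d*b*b'*(s*t) := by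
      have h2 : 2*d*(b*s)*q ≤ 2*d*(b*s)*(b'*t) :=
        mul_le_mul_of_nonneg_left hqt (by positivity)
      nlinarith [h2]
    have e'pos : (0:ℝ) < d^2*(b^2+b'^2)/2 := by positivity
    have h5 : (0:ℝ) ≤ 2*b^2 - d^2*(b^2+b'^2) := by nlinarith
    have hef : (d*b*b')^2 ≤ (d^2*(b^2+b'^2)/2) * (b^2 - d^2*(b^2-b'^2)/2) := by
      have key : (d^2*(b^2+b'^2)/2) * (b^2 - d^2*(b^2-b'^2)/2) - (d*b*b')^2
          = (d^2/4) * ((b^2-b'^2) * (2*b^2 - d^2*(b^2+b'^2))) := by ring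
      have h6 : (0:ℝ) ≤ (d^2/4) * ((b^2-b'^2) * (2*b^2 - d^2*(b^2+b'^2))) :=
        mul_nonneg (by positivity) (mul_nonneg hbb' h5)
      linarith
    have hquad := stmt4_quad (d^2*(b^2+b'^2)/2) (b^2 - d^2*(b^2-b'^2)/2) (d*b*b') s t e'pos hef
    have hV3 : (1-d^2)*b^2*s^2 + 2*d*b*b'*(s*t) ≤ (b^2 - d^2*(b^2-b'^2)/2)*(s^2+t^2) := by
      linarith [hquad]
    have hst : s^2 + t^2 = 1 := by rw [ht2]; ring
    rw [hst] at hV3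
    linarith
  · have h2 : (d*(b*s))^2 ≤ q^2 := by
      nlinarith [mul_nonneg (mul_nonneg hd.le hb.le) hs]
    have hs2 : s ^ 2 * (d ^ 2 * b ^ 2 + b' ^ 2) ≤ b' ^ 2 := by nlinarith
    have hpos : (0:ℝ) < d^2*b^2 + b'^2 := by positivity
    have hkey : b'^2 ≤ (1 - d^2/2) * (d^2*b^2+b'^2) := by
      nlinarith [mul_nonneg (sq_nonneg d) (by nlinarith : (0:ℝ) ≤ 2*b^2 - d^2*b^2 - b'^2)]
    have hs3 : s^2 ≤ 1 - d^2/2 := by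
      have h4 : s^2 * (d^2*b^2+b'^2) ≤ (1 - d^2/2) * (d^2*b^2+b'^2) := le_trans hs2 hkey
      exact le_of_mul_le_mul_right h4 hpos
    nlinarith [sq_nonneg w, mul_le_mul_of_nonneg_left hs3 hbb']

private lemma stmt4_sq_le {x y : ℝ} (hx : 0 ≤ x) (hy : 0 ≤ y) (hh : x^2 ≤ y^2) : x ≤ y := by
  nlinarith

private lemma stmt4_series {E : Type*} [NormedAddCommGroup E] [InnerProductSpace ℝ E]
    [CompleteSpace E]
    {h : ℕ → E} (hh : Orthonormal ℝ h) {c : ℕ → ℝ} (hc : Summable (fun i => c i ^ 2)) :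
    Summable (fun i => c i • h i) ∧
      (∀ w : E, ⟪w, ∑' i, c i • h i⟫ = ∑' i, c i * ⟪w, h i⟫) ∧
      (∀ j, ⟪h j, ∑' i, c i • h i⟫ = c j) ∧
      ‖∑' i, c i • h i‖ ^ 2 = ∑' i, c i ^ 2 := by
  classical
  have hsum : Summable (fun i => c i • h i) := by
    have h1 : Summable (fun i => ‖c i‖ ^ 2) := by simpa [Real.norm_eq_abs, sq_abs] using hc
    have h2 := (hh.orthogonalFamily.summable_iff_norm_sq_summable (fun i => c i)).2 h1
    simpa [LinearIsometry.toSpanSingleton_apply] using h2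
  have hinner : ∀ w : E, ⟪w, ∑' i, c i • h i⟫ = ∑' i, c i * ⟪w, h i⟫ := by
    intro w
    have h3 := ContinuousLinearMap.map_tsum (innerSL ℝ w) hsum
    simpa [real_inner_smul_right] using h3
  have hcoef : ∀ j, ⟪h j, ∑' i, c i • h i⟫ = c j := by
    intro j
    rw [hinner (h j), tsum_eq_single j]
    · have h4 : ⟪h j, h j⟫ = 1 := by
        have h5 := hh.1 j
        rw [real_inner_self_eq_norm_sq, h5]; norm_num
      rw [h4, mul_one]
    · intro i hij
      rw [hh.2 (Ne.symm hij), mul_zero]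
  refine ⟨hsum, hinner, hcoef, ?_⟩
  rw [← real_inner_self_eq_norm_sq, hinner]
  refine tsum_congr fun i => ?_
  rw [real_inner_comm, hcoef i]; ring

set_option maxHeartbeats 4000000 in
/-- Theorem 1, part (4), abstract form. Let `H₁`, `H₂` be separable real
Hilbert spaces, `A : H₂ → H₁` bounded linear with `A ∘ A*` trace class
(`Summable fun i => β i ^ 2`), with singular value decomposition given by orthonormal
families `(g i)`, `(h i)` and nonincreasing singular values `β i ≥ 0` (`A (h i) = β i • g i`,
`A* (g i) = β i • h i`, `A` vanishing on the orthogonal complement of the span of the `h i`),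
and assume `β 0 > 0` (the top singular value, `β₁` in the paper's 1-based indexing).
Let `R : H₂ → H₂` be an orthogonal projection, and let `l` be the largest index with
`β l = β 0` (so the top singular subspace is `span {h 0, …, h l}`, of dimension `l + 1`).
Then `‖A ∘ R ∘ A*‖ < ‖A ∘ A*‖` if and only if the only vector `a ∈ ℝ^(l+1)` with
`R (∑ i, a i • h i) = ∑ i, a i • h i` is the zero vector. -/
theorem stmt4 {H₁ H₂ : Type*}
    [NormedAddCommGroup H₁] [InnerProductSpace ℝ H₁] [CompleteSpace H₁]
    [NormedAddCommGroup H₂] [InnerProductSpace ℝ H₂] [CompleteSpace H₂]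
    [TopologicalSpace.SeparableSpace H₁] [TopologicalSpace.SeparableSpace H₂]
    (A : H₂ →L[ℝ] H₁)
    (g : ℕ → H₁) (h : ℕ → H₂) (hg_on : Orthonormal ℝ g) (hh_on : Orthonormal ℝ h)
    (β : ℕ → ℝ) (hβ_anti : Antitone β) (hβ_nonneg : ∀ i, 0 ≤ β i)
    (hAh : ∀ i, A (h i) = β i • g i)
    (hAg : ∀ i, ContinuousLinearMap.adjoint A (g i) = β i • h i)
    (hA_van : ∀ v : H₂, (∀ i, ⟪h i, v⟫ = 0) → A v = 0)
    (htc : Summable fun i => β i ^ 2)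
    (hβ0_pos : 0 < β 0)
    (R : H₂ →L[ℝ] H₂)
    (hR_sa : ContinuousLinearMap.adjoint R = R) (hR_idem : R ∘L R = R)
    (l : ℕ) (hl : β l = β 0) (hl_max : ∀ i, β i = β 0 → i ≤ l) :
    ‖A ∘L R ∘L ContinuousLinearMap.adjoint A‖ < ‖A ∘L ContinuousLinearMap.adjoint A‖
      ↔ ∀ a : Fin (l + 1) → ℝ,
          R (∑ i, a i • h (i : ℕ)) = ∑ i, a i • h (i : ℕ) → a = 0 := by
  classical
  set Ad := ContinuousLinearMap.adjoint A with hAd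
  -- Bessel summability
  have hbes : ∀ u : H₁, Summable (fun i => ⟪g i, u⟫ ^ 2) := fun u => by
    simpa [Real.norm_eq_abs, sq_abs] using hg_on.inner_products_summable (x := u)
  have hbes_le : ∀ u : H₁, (∑' i, ⟪g i, u⟫ ^ 2) ≤ ‖u‖ ^ 2 := fun u => by
    have := hg_on.tsum_inner_products_le (x := u)
    simpa [Real.norm_eq_abs, sq_abs] using this
  have hβ0le : ∀ i, β i ≤ β 0 := fun i => hβ_anti (Nat.zero_le i)
  have hcsum : ∀ u : H₁, Summable (fun i => (β i * ⟪g i, u⟫) ^ 2) := by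
    intro u
    refine Summable.of_nonneg_of_le (fun i => sq_nonneg _) (fun i => ?_)
      ((hbes u).mul_left (β 0 ^ 2))
    have h1 : (β i * ⟪g i, u⟫)^2 = β i ^2 * ⟪g i, u⟫^2 := by ring
    rw [h1]
    exact mul_le_mul_of_nonneg_right (by nlinarith [hβ_nonneg i, hβ0le i]) (sq_nonneg _)
  -- adjoint representation
  have hrep : ∀ u : H₁, Ad u = ∑' i, (β i * ⟪g i, u⟫) • h i := by
    intro u
    obtain ⟨hsum, hinner, hcoef, -⟩ := stmt4_series hh_on (hcsum u)
    set T := ∑' i, (β i * ⟪g i, u⟫) • h i with hT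
    have hwj : ∀ j, ⟪h j, Ad u - T⟫ = 0 := by
      intro j
      rw [inner_sub_right, hcoef j]
      have h1 : ⟪h j, Ad u⟫ = β j * ⟪g j, u⟫ := by
        rw [real_inner_comm, hAd, ContinuousLinearMap.adjoint_inner_left, hAh j,
          real_inner_smul_right, real_inner_comm]
      rw [h1]; ring
    have hAw : A (Ad u - T) = 0 := hA_van _ hwj
    have h1 : ⟪Ad u - T, Ad u⟫ = 0 := by
      rw [hAd, ContinuousLinearMap.adjoint_inner_right, hAw, inner_zero_left]
    have h2 : ⟪Ad u - T, T⟫ = 0 := by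
      rw [hinner]
      have hz : ∀ i, (β i * ⟪g i, u⟫) * ⟪Ad u - T, h i⟫ = 0 := fun i => by
        have hz1 := hwj i
        rw [real_inner_comm] at hz1
        rw [hz1, mul_zero]
      rw [tsum_congr hz, tsum_zero]
    have hzero : ⟪Ad u - T, Ad u - T⟫ = 0 := by
      rw [inner_sub_right, h1, h2, sub_zero]
    exact sub_eq_zero.mp (inner_self_eq_zero.mp hzero)
  -- norm bounds
  have hAd_nsq : ∀ u : H₁, ‖Ad u‖^2 = ∑' i, (β i * ⟪g i, u⟫)^2 := by
    intro u
    obtain ⟨-, -, -, hnorm⟩ := stmt4_series hh_on (hcsum u)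
    rw [hrep u]; exact hnorm
  have hAd_le : ∀ u : H₁, ‖Ad u‖ ≤ β 0 * ‖u‖ := by
    intro u
    refine stmt4_sq_le (norm_nonneg _) (by positivity) ?_
    rw [hAd_nsq u]
    have h1 : (∑' i, (β i * ⟪g i, u⟫)^2) ≤ ∑' i, β 0 ^2 * ⟪g i, u⟫^2 := by
      refine Summable.tsum_le_tsum (fun i => ?_) (hcsum u) ((hbes u).mul_left (β 0 ^ 2))
      have h2 : (β i * ⟪g i, u⟫)^2 = β i ^2 * ⟪g i, u⟫^2 := by ring
      rw [h2]
      exact mul_le_mul_of_nonneg_right (by nlinarith [hβ_nonneg i, hβ0le i]) (sq_nonneg _)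
    rw [tsum_mul_left] at h1
    have h3 := hbes_le u
    nlinarith [sq_nonneg (β 0)]
  have hA_le : ∀ v : H₂, ‖A v‖ ≤ β 0 * ‖v‖ := by
    have hAd_op : ‖Ad‖ ≤ β 0 := ContinuousLinearMap.opNorm_le_bound _ hβ0_pos.le hAd_le
    intro v
    have h1 : ‖A‖ = ‖Ad‖ := (ContinuousLinearMap.adjoint.norm_map A).symm
    calc ‖A v‖ ≤ ‖A‖ * ‖v‖ := A.le_opNorm v
      _ ≤ β 0 * ‖v‖ := by
          rw [h1]; exact mul_le_mul_of_nonneg_right hAd_op (norm_nonneg v)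
  have hg0 : ‖g 0‖ = 1 := hg_on.1 0
  have hAAd : ‖A ∘L Ad‖ = β 0 ^ 2 := by
    refine le_antisymm ?_ ?_
    · refine ContinuousLinearMap.opNorm_le_bound _ (by positivity) fun u => ?_
      calc ‖(A ∘L Ad) u‖ = ‖A (Ad u)‖ := rfl
        _ ≤ β 0 * ‖Ad u‖ := hA_le _
        _ ≤ β 0 * (β 0 * ‖u‖) := mul_le_mul_of_nonneg_left (hAd_le u) hβ0_pos.le
        _ = β 0 ^2 * ‖u‖ := by ring
    · have h1 : (A ∘L Ad) (g 0) = β 0 • (β 0 • g 0) := by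
        simp only [ContinuousLinearMap.comp_apply, ← hAd, hAg 0, map_smul, hAh 0]
      have h2 : ‖(A ∘L Ad) (g 0)‖ = β 0 ^2 := by
        rw [h1, norm_smul, norm_smul, hg0, Real.norm_eq_abs, abs_of_nonneg hβ0_pos.le]
        ring
      calc (β 0:ℝ)^2 = ‖(A ∘L Ad) (g 0)‖ := h2.symm
        _ ≤ ‖A ∘L Ad‖ * ‖g 0‖ := ContinuousLinearMap.le_opNorm _ _
        _ = ‖A ∘L Ad‖ := by rw [hg0, mul_one]
  have hβeq : ∀ i, i ≤ l → β i = β 0 :=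
    fun i hi => le_antisymm (hβ0le i) (hl ▸ hβ_anti hi)
  constructor
  · -- strict norm inequality → only zero fixed vector
    intro hlt a ha
    by_contra hane
    have hgfin : Orthonormal ℝ (fun i : Fin (l+1) => g (i : ℕ)) :=
      hg_on.comp _ Fin.val_injective
    have hhfin : Orthonormal ℝ (fun i : Fin (l+1) => h (i : ℕ)) :=
      hh_on.comp _ Fin.val_injective
    set x := ∑ i : Fin (l+1), a i • h (i : ℕ) with hx
    set u := ∑ i : Fin (l+1), a i • g (i : ℕ) with hu
    have hu2 : ‖u‖^2 = ∑ i : Fin (l+1), a i ^2 := by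
      rw [← real_inner_self_eq_norm_sq, hu]
      rw [hgfin.inner_sum a a Finset.univ]
      simp [sq]
    have hsumpos : 0 < ∑ i : Fin (l+1), a i ^2 := by
      obtain ⟨i, hi⟩ := Function.ne_iff.mp hane
      refine Finset.sum_pos' (fun j _ => sq_nonneg _) ⟨i, Finset.mem_univ i, ?_⟩
      have : a i ≠ 0 := by simpa using hi
      positivity
    have hupos : 0 < ‖u‖ := by nlinarith [norm_nonneg u]
    have hAdu : Ad u = β 0 • x := by
      rw [hu, map_sum, hx, Finset.smul_sum]
      refine Finset.sum_congr rfl fun i _ => ?_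
      rw [map_smul, hAg (i:ℕ), hβeq (i:ℕ) (Nat.lt_succ_iff.mp i.isLt)]
      rw [smul_comm]
    have hAx : A x = β 0 • u := by
      rw [hx, map_sum, hu, Finset.smul_sum]
      refine Finset.sum_congr rfl fun i _ => ?_
      rw [map_smul, hAh (i:ℕ), hβeq (i:ℕ) (Nat.lt_succ_iff.mp i.isLt)]
      rw [smul_comm]
    have hval : (A ∘L R ∘L Ad) u = (β 0^2) • u := by
      simp only [ContinuousLinearMap.comp_apply, hAdu, map_smul, ha, hAx]
      rw [smul_smul, sq]
    have hnval : ‖(A ∘L R ∘L Ad) u‖ = β 0^2 * ‖u‖ := by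
      rw [hval, norm_smul, Real.norm_eq_abs, abs_of_nonneg (by positivity)]
    have hge : β 0^2 * ‖u‖ ≤ ‖A ∘L R ∘L Ad‖ * ‖u‖ := by
      rw [← hnval]; exact ContinuousLinearMap.le_opNorm _ _
    have : β 0^2 ≤ ‖A ∘L R ∘L Ad‖ := le_of_mul_le_mul_right (by linarith) hupos
    rw [hAAd] at hlt
    linarith
  · intro honly
    have hRR : ∀ v, R (R v) = R v := fun v => by
      have h1 := DFunLike.congr_fun hR_idem v
      simpa using h1
    have hRsym : ∀ v w : H₂, ⟪R v, w⟫ = ⟪v, R w⟫ := by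
      intro v w
      conv_lhs => rw [← hR_sa]
      exact ContinuousLinearMap.adjoint_inner_left R w v
    have hRnsq : ∀ v, ‖R v‖^2 = ⟪v, R v⟫ := fun v => by
      rw [← real_inner_self_eq_norm_sq, hRsym v (R v), hRR]
    have hpyth : ∀ v, ‖R v‖^2 + ‖v - R v‖^2 = ‖v‖^2 := fun v => by
      have h1 := norm_sub_sq_real v (R v)
      have h2 := hRnsq v
      linarith
    have hRle : ∀ v, ‖R v‖ ≤ ‖v‖ := fun v => by
      refine stmt4_sq_le (norm_nonneg _) (norm_nonneg _) ?_
      have h1 := hpyth v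
      nlinarith [sq_nonneg (‖v - R v‖)]
    have hfix : ∀ v, ‖R v‖ = ‖v‖ → R v = v := by
      intro v hv
      have h1 := hpyth v
      rw [hv] at h1
      have h2 : ‖v - R v‖^2 = 0 := by linarith
      have h3 : ‖v - R v‖ = 0 := (pow_eq_zero_iff two_ne_zero).mp h2
      have h4 : v - R v = 0 := norm_eq_zero.mp h3
      exact (sub_eq_zero.mp h4).symm
    set F : Submodule ℝ H₂ := Submodule.span ℝ (Set.range (fun i : Fin (l+1) => h (i:ℕ))) with hF
    haveI : FiniteDimensional ℝ F := FiniteDimensional.span_of_finite ℝ (Set.finite_range _)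
    have h0F : h 0 ∈ F := Submodule.subset_span ⟨(0 : Fin (l+1)), rfl⟩
    have hcont : Continuous (fun x : F => ‖R (x : H₂)‖) :=
      (R.continuous.comp continuous_subtype_val).norm
    have hsph_ne : (Metric.sphere (0:F) 1).Nonempty := by
      refine ⟨⟨h 0, h0F⟩, ?_⟩
      rw [mem_sphere_zero_iff_norm]
      have : ‖(⟨h 0, h0F⟩ : F)‖ = ‖h 0‖ := rfl
      rw [this, hh_on.1 0]
    obtain ⟨x₀, hx₀mem, hx₀max'⟩ :=
      (isCompact_sphere (0:F) 1).exists_isMaxOn hsph_ne hcont.continuousOn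
    have hx₀max : ∀ y ∈ Metric.sphere (0:F) 1, ‖R (y:H₂)‖ ≤ ‖R (x₀:H₂)‖ :=
      fun y hy => hx₀max' hy
    set cst := ‖R (x₀ : H₂)‖ with hcst
    have hx₀norm : ‖(x₀ : H₂)‖ = 1 := by
      have h1 := mem_sphere_zero_iff_norm.mp hx₀mem
      simpa using h1
    have hcst0 : 0 ≤ cst := norm_nonneg _
    have hcst_le : cst ≤ 1 := le_trans (hRle _) (le_of_eq hx₀norm)
    have hcst_lt : cst < 1 := by
      rcases lt_or_eq_of_le hcst_le with hlt1 | heq1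
      · exact hlt1
      · exfalso
        have hfx : R (x₀ : H₂) = (x₀ : H₂) := hfix _ (by rw [← hcst, heq1, hx₀norm])
        obtain ⟨a, hax⟩ := (Submodule.mem_span_range_iff_exists_fun ℝ).mp x₀.2
        have h0 := honly a (by rw [hax]; exact hfx)
        rw [h0] at hax
        simp only [Pi.zero_apply, zero_smul, Finset.sum_const_zero] at hax
        rw [← hax] at hx₀norm
        simp at hx₀norm
    have hcb : ∀ x : F, ‖R (x:H₂)‖ ≤ cst * ‖(x:H₂)‖ := by
      intro x
      rcases eq_or_ne x 0 with rfl | hx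
      · simp
      · have hxne : (x:H₂) ≠ 0 := fun hc => hx (Submodule.coe_eq_zero.mp hc)
        have hxn : (0:ℝ) < ‖(x:H₂)‖ := norm_pos_iff.mpr hxne
        set y : F := ‖(x:H₂)‖⁻¹ • x with hy
        have hyc : (y : H₂) = ‖(x:H₂)‖⁻¹ • (x:H₂) := rfl
        have hymem : y ∈ Metric.sphere (0:F) 1 := by
          rw [mem_sphere_zero_iff_norm]
          have h1 : ‖y‖ = ‖(y : H₂)‖ := rfl
          rw [h1, hyc, norm_smul, Real.norm_eq_abs, abs_inv, abs_of_pos hxn]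
          field_simp
        have hmax := hx₀max y hymem
        rw [hyc, map_smul, norm_smul, Real.norm_eq_abs, abs_inv, abs_of_pos hxn] at hmax
        calc ‖R (x:H₂)‖ = ‖(x:H₂)‖ * (‖(x:H₂)‖⁻¹ * ‖R (x:H₂)‖) := by field_simp
          _ ≤ ‖(x:H₂)‖ * cst := mul_le_mul_of_nonneg_left hmax hxn.le
          _ = cst * ‖(x:H₂)‖ := mul_comm _ _
    set dd := Real.sqrt (1 - cst^2) with hdd
    have hdd2 : dd^2 = 1 - cst^2 := Real.sq_sqrt (by nlinarith)
    have hddpos : 0 < dd := Real.sqrt_pos.mpr (by nlinarith)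
    have hdd1 : dd ≤ 1 := by nlinarith [sq_nonneg cst]
    have hdlow : ∀ x : F, dd * ‖(x:H₂)‖ ≤ ‖(x:H₂) - R (x:H₂)‖ := by
      intro x
      have h1 := hpyth (x:H₂)
      have h2 := hcb x
      refine stmt4_sq_le (by positivity) (norm_nonneg _) ?_
      have h3 : ‖R (x:H₂)‖^2 ≤ cst^2 * ‖(x:H₂)‖^2 := by
        nlinarith [norm_nonneg (R (x:H₂)), norm_nonneg (x:H₂),
          mul_nonneg hcst0 (norm_nonneg (x:H₂))]
      nlinarith [hdd2]
    have hβ'lt : β (l+1) < β 0 := by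
      rcases lt_or_eq_of_le (hβ0le (l+1)) with hlt1 | heq1
      · exact hlt1
      · exact absurd (hl_max _ heq1) (by omega)
    have hβ'0 : (0:ℝ) ≤ β (l+1) := hβ_nonneg _
    have hdiffpos : 0 < β 0^2 - β (l+1)^2 := by nlinarith
    set ε := dd^2 * (β 0^2 - β (l+1)^2) / 2 with hε
    have hεpos : 0 < ε := by
      rw [hε]
      exact div_pos (mul_pos (pow_pos hddpos 2) hdiffpos) two_pos
    have hmain : ∀ u : H₁, ‖u‖ ≤ 1 → ‖R (Ad u)‖^2 ≤ β 0^2 - ε := by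
      intro u hu1
      obtain ⟨hsum, hinner, hcoef, hnorm⟩ := stmt4_series hh_on (hcsum u)
      have hshift_c : Summable (fun i => (β (i+(l+1)) * ⟪g (i+(l+1)), u⟫)^2) :=
        (summable_nat_add_iff (l+1)).mpr (hcsum u)
      have hh' : Orthonormal ℝ (fun i : ℕ => h (i + (l+1))) :=
        hh_on.comp (fun i => i + (l+1)) (add_left_injective (l+1))
      obtain ⟨hsumQ, hinnerQ, hcoefQ, hnormQ⟩ := stmt4_series hh' hshift_c
      set s2 := ∑ i ∈ Finset.range (l+1), ⟪g i, u⟫^2 with hs2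
      set P := ∑ i ∈ Finset.range (l+1), (β 0 * ⟪g i, u⟫) • h i with hP
      set Q := ∑' i, (β (i+(l+1)) * ⟪g (i+(l+1)), u⟫) • h (i+(l+1)) with hQ
      have hsplit : Ad u = P + Q := by
        rw [hrep u, ← Summable.sum_add_tsum_nat_add (l+1) hsum, hP, hQ]
        congr 1
        refine Finset.sum_congr rfl fun i hi => ?_
        rw [hβeq i (Nat.lt_succ_iff.mp (Finset.mem_range.mp hi))]
      have hs2nonneg : 0 ≤ s2 := Finset.sum_nonneg fun i _ => sq_nonneg _
      set s := Real.sqrt s2 with hs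
      have hs2' : s^2 = s2 := Real.sq_sqrt hs2nonneg
      have hsnn : 0 ≤ s := Real.sqrt_nonneg _
      have hs2le : s2 ≤ 1 := by
        have h1 : s2 ≤ ‖u‖^2 := by
          have h2 := hg_on.sum_inner_products_le (x := u) (s := Finset.range (l+1))
          rw [hs2]
          simpa [Real.norm_eq_abs, sq_abs] using h2
        exact h1.trans (pow_le_one₀ (norm_nonneg u) hu1)
      have hs1 : s ≤ 1 := stmt4_sq_le hsnn zero_le_one (by rw [hs2']; simpa using hs2le)
      have hP2 : ‖P‖^2 = β 0^2 * s2 := by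
        rw [← real_inner_self_eq_norm_sq, hP,
          hh_on.inner_sum (fun i => β 0 * ⟪g i, u⟫) (fun i => β 0 * ⟪g i, u⟫)
            (Finset.range (l+1)), hs2, Finset.mul_sum]
        refine Finset.sum_congr rfl fun i _ => ?_
        simp only [starRingEnd_apply, star_trivial]
        ring
      have hPnorm : ‖P‖ = β 0 * s := by
        have h1 : ‖P‖^2 = (β 0 * s)^2 := by rw [hP2, ← hs2']; ring
        have h2 := congrArg Real.sqrt h1
        rwa [Real.sqrt_sq (norm_nonneg _), Real.sqrt_sq (by positivity)] at h2
      have hPF : P ∈ F := by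
        rw [hP]
        refine Submodule.sum_mem _ fun i hi => Submodule.smul_mem _ _ (Submodule.subset_span ?_)
        exact ⟨⟨i, Finset.mem_range.mp hi⟩, rfl⟩
      have hQle : ‖Q‖^2 ≤ β (l+1)^2 * (1 - s^2) := by
        have h1 : (∑' i, (β (i+(l+1)) * ⟪g (i+(l+1)), u⟫)^2)
            ≤ ∑' i, β (l+1)^2 * ⟪g (i+(l+1)), u⟫^2 := by
          refine Summable.tsum_le_tsum (fun i => ?_) hshift_c
            (((summable_nat_add_iff (l+1)).mpr (hbes u)).mul_left _)
          have hb1 : β (i+(l+1)) ≤ β (l+1) := hβ_anti (by omega)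
          have hb2 : (0:ℝ) ≤ β (i+(l+1)) := hβ_nonneg _
          have h3 : (β (i+(l+1)) * ⟪g (i+(l+1)), u⟫)^2
              = β (i+(l+1))^2 * ⟪g (i+(l+1)), u⟫^2 := by ring
          rw [h3]
          exact mul_le_mul_of_nonneg_right (pow_le_pow_left₀ hb2 hb1 2) (sq_nonneg _)
        rw [tsum_mul_left] at h1
        have h2 : (∑' i, ⟪g (i+(l+1)), u⟫^2) ≤ 1 - s2 := by
          have h3 := Summable.sum_add_tsum_nat_add (f := fun i => ⟪g i, u⟫^2) (l+1) (hbes u)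
          have h4 := hbes_le u
          have h5 : ‖u‖^2 ≤ 1 := pow_le_one₀ (norm_nonneg u) hu1
          rw [hs2]
          linarith
        calc ‖Q‖^2 = ∑' i, (β (i+(l+1)) * ⟪g (i+(l+1)), u⟫)^2 := hnormQ
          _ ≤ β (l+1)^2 * ∑' i, ⟪g (i+(l+1)), u⟫^2 := h1
          _ ≤ β (l+1)^2 * (1 - s2) := mul_le_mul_of_nonneg_left h2 (sq_nonneg _)
          _ = β (l+1)^2 * (1 - s^2) := by rw [hs2']
      have hPQ : ⟪P, Q⟫ = 0 := by
        rw [hP, sum_inner]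
        refine Finset.sum_eq_zero fun i hi => ?_
        rw [real_inner_smul_left]
        have h1 : ⟪h i, Q⟫ = 0 := by
          rw [hinnerQ (h i)]
          have hz : ∀ k, (β (k+(l+1)) * ⟪g (k+(l+1)), u⟫) * ⟪h i, h (k+(l+1))⟫ = 0 := by
            intro k
            rw [hh_on.2 (show i ≠ k+(l+1) by
              have := Finset.mem_range.mp hi; omega), mul_zero]
          rw [tsum_congr hz, tsum_zero]
        rw [h1, mul_zero]
      have hAd2 : ‖Ad u‖^2 = ‖P‖^2 + ‖Q‖^2 := by
        rw [hsplit, norm_add_sq_real, hPQ]; ring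
      have hVeq : ‖R (Ad u)‖^2 = ‖P‖^2 + ‖Q‖^2 - ‖Ad u - R (Ad u)‖^2 := by
        have h1 := hpyth (Ad u)
        linarith [hAd2]
      have hQRle : ‖Q - R Q‖ ≤ ‖Q‖ := by
        have h1 := hpyth Q
        exact stmt4_sq_le (norm_nonneg _) (norm_nonneg _) (by linarith [sq_nonneg ‖R Q‖])
      have hw_lb : dd * (β 0 * s) - ‖Q‖ ≤ ‖Ad u - R (Ad u)‖ := by
        have h1 : Ad u - R (Ad u) = (P - R P) + (Q - R Q) := by
          rw [hsplit, map_add]; abel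
        have h2 : ‖P - R P‖ - ‖Q - R Q‖ ≤ ‖(P - R P) + (Q - R Q)‖ := by
          have h4 : ‖P - R P‖ ≤ ‖(P - R P) + (Q - R Q)‖ + ‖Q - R Q‖ := by
            calc ‖P - R P‖ = ‖((P - R P) + (Q - R Q)) - (Q - R Q)‖ := by congr 1; abel
              _ ≤ _ := norm_sub_le _ _
          linarith
        have h4 : dd * ‖P‖ ≤ ‖P - R P‖ := hdlow ⟨P, hPF⟩
        rw [hPnorm] at h4
        rw [h1]
        calc dd * (β 0 * s) - ‖Q‖ ≤ ‖P - R P‖ - ‖Q - R Q‖ := by linarith [hQRle, h4]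
          _ ≤ _ := h2
      have hkey := stmt4_key_ineq (β 0) (β (l+1)) dd s ‖Q‖ ‖Ad u - R (Ad u)‖ hβ0_pos hβ'0
        hβ'lt hddpos hdd1 hsnn hs1 (norm_nonneg _) (norm_nonneg _) hQle hw_lb
      have hfin2 : ‖R (Ad u)‖^2 = (β 0 * s)^2 + ‖Q‖^2 - ‖Ad u - R (Ad u)‖^2 := by
        rw [hVeq, hPnorm]
      rw [hfin2, hε]
      exact hkey

    have hβε : (0:ℝ) ≤ β 0^2 - ε := le_trans (sq_nonneg ‖R (Ad 0)‖) (hmain 0 (by simp))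
    have hsq : Real.sqrt (β 0^2 - ε) < β 0 := by
      have h1 : Real.sqrt (β 0^2 - ε) < Real.sqrt (β 0^2) :=
        Real.sqrt_lt_sqrt hβε (by linarith)
      rwa [Real.sqrt_sq hβ0_pos.le] at h1
    have hfin : ‖A ∘L R ∘L Ad‖ ≤ β 0 * Real.sqrt (β 0^2 - ε) := by
      refine ContinuousLinearMap.opNorm_le_of_unit_norm (by positivity) fun u hu => ?_
      calc ‖(A ∘L R ∘L Ad) u‖ = ‖A (R (Ad u))‖ := rfl
        _ ≤ β 0 * ‖R (Ad u)‖ := hA_le _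
        _ ≤ β 0 * Real.sqrt (β 0^2 - ε) := by
            refine mul_le_mul_of_nonneg_left ?_ hβ0_pos.le
            refine stmt4_sq_le (norm_nonneg _) (Real.sqrt_nonneg _) ?_
            rw [Real.sq_sqrt hβε]
            exact hmain u (le_of_eq hu)
    rw [hAAd]
    calc ‖A ∘L R ∘L Ad‖ ≤ β 0 * Real.sqrt (β 0^2 - ε) := hfin
      _ < β 0 * β 0 := mul_lt_mul_of_pos_left hsq hβ0_pos
      _ = β 0^2 := by ring
end

section
/- Let G be a locally compact, separable metric group acting continuously on a locally compact, separable metric space Y, let ω_l be a left Haar measure on G with modular function Δ (so that ∫_G φ(g·g̃⁻¹) ω_l(dg) = Δ(g̃) ∫_G φ(g) ω_l(dg) for every g̃ ∈ G and integrable φ : G → ℝ), let χ : G → (0,∞) be a continuous multiplier, let f_Y be a probability density on Y with respect to ν, and suppose m(y) := ∫_G f_Y(g·y) χ(g) ω_l(dg) is positive and finite for all y and satisfies χ(g) m(g·y) = Δ(g⁻¹) m(y) for all g ∈ G, y ∈ Y. Define (Rh)(y) := m(y)⁻¹ ∫_G h(g·y) f_Y(g·y) χ(g) ω_l(dg) for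 integrable h. Then for every such h, every g′ ∈ G and every y ∈ Y, (Rh)(g′·y) = (Rh)(y); that is, every function in the range of R is invariant under the group action. -/
open MeasureTheory

/-- necessity direction of Lemma 2. With the setup of the group-action
Markov operator `R` — `G` a locally compact, separable metric group acting continuously on
a locally compact, separable metric space `Y`, `ω` a left Haar measure on `G` with modular
function `Δ` (so `∫ g, φ (g * g̃⁻¹) ∂ω = Δ g̃ * ∫ g, φ g ∂ω` for integrable `φ`),
`χ` a continuous multiplier, `fY` a probability density on `Y` w.r.t. `ν`, and
`m y := ∫ g, fY (g • y) * χ g ∂ω` positive and finite with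
`χ g * m (g • y) = Δ g⁻¹ * m y` — every function in the range of
`(R h) y := (m y)⁻¹ * ∫ g, h (g • y) * fY (g • y) * χ g ∂ω` is invariant under the group
action: `(R h) (g' • y) = (R h) y`. -/
theorem stmt9 {G Y : Type*}
    [Group G] [MetricSpace G] [IsTopologicalGroup G] [LocallyCompactSpace G]
    [TopologicalSpace.SeparableSpace G] [MeasurableSpace G] [BorelSpace G]
    [MetricSpace Y] [LocallyCompactSpace Y] [TopologicalSpace.SeparableSpace Y]
    [MeasurableSpace Y] [BorelSpace Y]
    [MulAction G Y] (hact : Continuous fun p : G × Y => p.1 • p.2)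
    (ω : Measure G) [ω.IsHaarMeasure]
    (Δ : G → ℝ) (hΔ_pos : ∀ g, 0 < Δ g)
    (hΔ : ∀ (gt : G) (φ : G → ℝ), Integrable φ ω →
      ∫ g, φ (g * gt⁻¹) ∂ω = Δ gt * ∫ g, φ g ∂ω)
    (ν : Measure Y)
    (fY : Y → ℝ) (hfY_nonneg : ∀ y, 0 ≤ fY y) (hfY_prob : ∫ y, fY y ∂ν = 1)
    (χ : G → ℝ) (hχ_cont : Continuous χ) (hχ_pos : ∀ g, 0 < χ g)
    (hχ_mul : ∀ g₁ g₂, χ (g₁ * g₂) = χ g₁ * χ g₂)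
    (m : Y → ℝ) (hm_def : ∀ y, m y = ∫ g, fY (g • y) * χ g ∂ω)
    (hm_pos : ∀ y, 0 < m y)
    (hm_fin : ∀ y, Integrable (fun g => fY (g • y) * χ g) ω)
    (hm_rel : ∀ (g : G) (y : Y), χ g * m (g • y) = Δ g⁻¹ * m y) :
    ∀ (h : Y → ℝ), (∀ y, Integrable (fun g => h (g • y) * fY (g • y) * χ g) ω) →
      ∀ (g' : G) (y : Y),
        (m (g' • y))⁻¹ * ∫ g, h (g • (g' • y)) * fY (g • (g' • y)) * χ g ∂ω
          = (m y)⁻¹ * ∫ g, h (g • y) * fY (g • y) * χ g ∂ω := by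
  intro h hint g' y
  have hχ1 : χ 1 = 1 :=
    mul_left_cancel₀ (ne_of_gt (hχ_pos 1)) (by rw [mul_one, ← hχ_mul, mul_one])
  have hχinv : χ g'⁻¹ = (χ g')⁻¹ := by
    refine eq_inv_of_mul_eq_one_right ?_
    rw [← hχ_mul]
    simp [hχ1]
  have hχne : χ g' ≠ 0 := ne_of_gt (hχ_pos g')
  have hΔne : Δ g' ≠ 0 := ne_of_gt (hΔ_pos g')
  have e1 : ∀ g : G, (g * g'⁻¹) • (g' • y) = g • y := by
    intro g; rw [smul_smul, inv_mul_cancel_right]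
  have e2 : ∀ g : G, χ (g * g'⁻¹) = χ g * (χ g')⁻¹ := fun g => by rw [hχ_mul, hχinv]
  -- relation for m
  have hmrel : m y = χ g' * Δ g' * m (g' • y) := by
    have key := hΔ g' (fun g => fY (g • (g' • y)) * χ g) (hm_fin (g' • y))
    simp only [e1, e2] at key
    have e3 : ∫ g, fY (g • y) * (χ g * (χ g')⁻¹) ∂ω
        = (∫ g, fY (g • y) * χ g ∂ω) * (χ g')⁻¹ := by
      rw [← integral_mul_const]
      congr 1
      funext g
      ring
    rw [e3, ← hm_def, ← hm_def] at key
    field_simp at key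
    linear_combination key
  -- relation for the numerator integral
  have hIrel : (∫ g, h (g • y) * fY (g • y) * χ g ∂ω)
      = χ g' * Δ g' * ∫ g, h (g • (g' • y)) * fY (g • (g' • y)) * χ g ∂ω := by
    have key := hΔ g' (fun g => h (g • (g' • y)) * fY (g • (g' • y)) * χ g) (hint (g' • y))
    simp only [e1, e2] at key
    have e3 : ∫ g, h (g • y) * fY (g • y) * (χ g * (χ g')⁻¹) ∂ω
        = (∫ g, h (g • y) * fY (g • y) * χ g ∂ω) * (χ g')⁻¹ := by
      rw [← integral_mul_const]
      congr 1
      funext g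
      ring
    rw [e3] at key
    field_simp at key
    linear_combination key
  have hmne : m (g' • y) ≠ 0 := ne_of_gt (hm_pos (g' • y))
  rw [hmrel, hIrel]
  field_simp
end

section
/- Let f : X × Y → [0,∞) be a probability density with respect to μ ⊗ ν with positive marginals f_X and f_Y, and suppose it admits a pointwise-convergent singular value expansion f(x,y)/(f_X(x) f_Y(y)) = ∑_{j≥0} β_j g_j(x) h_j(y), where β₀ = 1, g₀ ≡ 1, h₀ ≡ 1, (g_j) and (h_j) are orthonormal bases of L²(f_X) and L²(f_Y), and β_j ∈ [0,1] are nonincreasing. Let G act on Y, and suppose that for every index j with β_j > 0 the function h_j is invariant under the group action, i.e., h_j(g·y) = h_j(y) for all g ∈ G, y ∈ Y. Then f_{X|Y}(x|y) = f_{X|Y}(x|g·y) for all g ∈ G, x ∈ X, and y ∈ Y, where f_{X|Y}(x|y) = f(x,y)/f_Y(y). -/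
open MeasureTheory

/-- key step in the proof of Theorem 2. Let `f : X × Y → [0,∞)` be a
probability density with respect to `μ ⊗ ν` with positive marginals `fX`, `fY`, admitting a
pointwise-convergent singular value expansion
`f x y / (fX x * fY y) = ∑' j, β j * gf j x * hf j y`, where `β 0 = 1`, `gf 0 ≡ 1`,
`hf 0 ≡ 1`, the families `(gf j)` and `(hf j)` are orthonormal bases of `L²(fX)` and
`L²(fY)` (orthonormality and completeness stated via weighted integrals), and
`β j ∈ [0,1]` is nonincreasing.  Let a group `G` act on `Y` and suppose `hf j` is invariant
under the action whenever `β j > 0`.  Then the conditional density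
`f_{X|Y}(x|y) = f x y / fY y` is invariant: `f x y / fY y = f x (g • y) / fY (g • y)`. -/
theorem stmt11 {X Y G : Type*}
    [MeasurableSpace X] [MeasurableSpace Y]
    [Group G] [MulAction G Y]
    (μ : Measure X) (ν : Measure Y) [SigmaFinite μ] [SigmaFinite ν]
    (f : X → Y → ℝ) (hf_nonneg : ∀ x y, 0 ≤ f x y)
    (fX : X → ℝ) (fY : Y → ℝ)
    (hfX_def : ∀ x, fX x = ∫ y, f x y ∂ν) (hfY_def : ∀ y, fY y = ∫ x, f x y ∂μ)
    (hfX_pos : ∀ x, 0 < fX x) (hfY_pos : ∀ y, 0 < fY y)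
    (hf_prob : ∫ x, ∫ y, f x y ∂ν ∂μ = 1)
    (β : ℕ → ℝ) (gf : ℕ → X → ℝ) (hf : ℕ → Y → ℝ)
    (hβ0 : β 0 = 1) (hg0 : ∀ x, gf 0 x = 1) (hh0 : ∀ y, hf 0 y = 1)
    (hβ_mem : ∀ j, β j ∈ Set.Icc (0 : ℝ) 1) (hβ_anti : Antitone β)
    (hg_ortho : ∀ i j, (∫ x, gf i x * gf j x * fX x ∂μ) = if i = j then 1 else 0)
    (hh_ortho : ∀ i j, (∫ y, hf i y * hf j y * fY y ∂ν) = if i = j then 1 else 0)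
    (hg_complete : ∀ φ : X → ℝ, Integrable (fun x => φ x ^ 2 * fX x) μ →
      (∀ i, ∫ x, φ x * gf i x * fX x ∂μ = 0) → ∀ᵐ x ∂μ, φ x = 0)
    (hh_complete : ∀ φ : Y → ℝ, Integrable (fun y => φ y ^ 2 * fY y) ν →
      (∀ i, ∫ y, φ y * hf i y * fY y ∂ν = 0) → ∀ᵐ y ∂ν, φ y = 0)
    (hexp : ∀ x y, f x y / (fX x * fY y) = ∑' j, β j * gf j x * hf j y)
    (hinv : ∀ j, 0 < β j → ∀ (g : G) (y : Y), hf j (g • y) = hf j y) :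
    ∀ (g : G) (x : X) (y : Y), f x y / fY y = f x (g • y) / fY (g • y) := by
  intro g x y
  have key : (∑' j, β j * gf j x * hf j (g • y)) = ∑' j, β j * gf j x * hf j y := by
    apply tsum_congr
    intro j
    rcases lt_or_eq_of_le (hβ_mem j).1 with h | h
    · rw [hinv j h g y]
    · simp [← h]
  have h1 := hexp x y
  have h2 := hexp x (g • y)
  rw [key, ← h1] at h2
  have hx := (hfX_pos x).ne'
  have hy := (hfY_pos y).ne'
  have hy' := (hfY_pos (g • y)).ne'
  field_simp at h2 ⊢
  nlinarith [h2, hfX_pos x]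
end

section
/- Fix integers m ≥ p ≥ 1, a matrix X ∈ ℝ^{m×p} of full column rank p with rows x₁ᵀ, …, x_mᵀ, and z ∈ ℝ^m. Then ∫_{ℝ^p} exp(−(1/2) ∑_{i=1}^m |zᵢ − xᵢᵀβ|) dβ < ∞. -/
open MeasureTheory Matrix Set

lemma aux_integrable_exp_neg_abs {b : ℝ} (hb : 0 < b) :
    Integrable (fun t : ℝ => Real.exp (-b * |t|)) := by
  have h1 : IntegrableOn (fun t : ℝ => Real.exp (-b * |t|)) (Ioi (0:ℝ)) :=
    (exp_neg_integrableOn_Ioi 0 hb).congr_fun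
      (fun t ht => by rw [abs_of_pos ht]) measurableSet_Ioi
  have h2 : IntegrableOn (fun t : ℝ => Real.exp (-b * |t|)) (Iic (0:ℝ)) := by
    rw [← Measure.map_neg_eq_self (volume : Measure ℝ)]
    let m : MeasurableEmbedding fun x : ℝ => -x := (Homeomorph.neg ℝ).measurableEmbedding
    rw [m.integrableOn_map_iff]
    simp_rw [Function.comp_def, abs_neg, neg_preimage, neg_Iic, neg_zero]
    exact Iff.mpr integrableOn_Ici_iff_integrableOn_Ioi h1
  have := h2.union h1
  rwa [Iic_union_Ioi, integrableOn_univ] at this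

/-- Remark after Proposition 1: propriety of the posterior for Bayesian
median regression. For `m ≥ p ≥ 1`, `X ∈ ℝ^{m×p}` of full column rank `p` with rows
`xᵢᵀ`, and `z ∈ ℝ^m`, the unnormalized posterior
`s(β, z) = exp(−(1/2) ∑ᵢ |zᵢ − xᵢᵀβ|)` is integrable over `β ∈ ℝ^p`. -/
theorem stmt14 (m p : ℕ) (hp : 1 ≤ p) (hpm : p ≤ m)
    (X : Matrix (Fin m) (Fin p) ℝ) (hrank : X.rank = p) (z : Fin m → ℝ) :
    Integrable
      (fun β : Fin p → ℝ => Real.exp (-(1 / 2) * ∑ i, |z i - (X *ᵥ β) i|))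
      (volume : Measure (Fin p → ℝ)) := by
  -- injectivity of mulVecLin
  have hker : LinearMap.ker X.mulVecLin = ⊥ := by
    have hrn := LinearMap.finrank_range_add_finrank_ker X.mulVecLin
    rw [Module.finrank_pi] at hrn
    have : Module.finrank ℝ (LinearMap.ker X.mulVecLin) = 0 := by
      have : X.rank = Module.finrank ℝ (LinearMap.range X.mulVecLin) := rfl
      simp only [Fintype.card_fin] at hrn
      omega
    exact Submodule.finrank_eq_zero.mp this
  obtain ⟨K, hK0, hK⟩ := LinearMap.exists_antilipschitzWith X.mulVecLin hker
  -- key lower bound: b * ∑ |β j| ≤ ∑ |z i - (Xβ) i| + C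
  set C : ℝ := ∑ i, |z i| with hC
  set b : ℝ := 1 / (K * p) with hb
  have hbpos : 0 < b := by
    apply one_div_pos.mpr
    exact mul_pos hK0 (by exact_mod_cast hp)
  have key : ∀ β : Fin p → ℝ, b * ∑ j, |β j| ≤ (∑ i, |z i - (X *ᵥ β) i|) + C := by
    intro β
    have h1 : ∑ j, |β j| ≤ (p : ℝ) * ‖β‖ := by
      calc ∑ j, |β j| ≤ ∑ _j : Fin p, ‖β‖ :=
            Finset.sum_le_sum fun j _ => by
              simpa [Real.norm_eq_abs] using norm_le_pi_norm β j
        _ = (p : ℝ) * ‖β‖ := by simp [mul_comm]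
    have h2 : ‖β‖ ≤ K * ‖X *ᵥ β‖ := by
      simpa [Matrix.mulVecLin_apply, dist_eq_norm] using hK.le_mul_dist β 0
    have h3 : ‖X *ᵥ β‖ ≤ ∑ i, |(X *ᵥ β) i| := by
      apply pi_norm_le_iff_of_nonneg (Finset.sum_nonneg fun i _ => abs_nonneg _) |>.mpr
      intro i
      simpa [Real.norm_eq_abs] using
        Finset.single_le_sum (f := fun i => |(X *ᵥ β) i|)
          (fun i _ => abs_nonneg _) (Finset.mem_univ i)
    have h4 : ∀ i, |(X *ᵥ β) i| ≤ |z i - (X *ᵥ β) i| + |z i| := by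
      intro i
      calc |(X *ᵥ β) i| = |(X *ᵥ β) i - z i + z i| := by ring_nf
        _ ≤ |(X *ᵥ β) i - z i| + |z i| := abs_add_le _ _
        _ = |z i - (X *ᵥ β) i| + |z i| := by rw [abs_sub_comm]
    have h5 : ∑ i, |(X *ᵥ β) i| ≤ (∑ i, |z i - (X *ᵥ β) i|) + C := by
      rw [hC, ← Finset.sum_add_distrib]
      exact Finset.sum_le_sum fun i _ => h4 i
    have hKp : (0:ℝ) < (K : ℝ) * p := mul_pos hK0 (by exact_mod_cast hp)
    rw [hb, div_mul_eq_mul_div, one_mul, div_le_iff₀ hKp]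
    calc ∑ j, |β j| ≤ (p : ℝ) * ‖β‖ := h1
      _ ≤ (p : ℝ) * (K * ‖X *ᵥ β‖) := by
          apply mul_le_mul_of_nonneg_left h2 (by positivity)
      _ ≤ (p : ℝ) * (K * ∑ i, |(X *ᵥ β) i|) := by
          apply mul_le_mul_of_nonneg_left _ (by positivity)
          exact mul_le_mul_of_nonneg_left h3 (by positivity)
      _ ≤ (p : ℝ) * (K * ((∑ i, |z i - (X *ᵥ β) i|) + C)) := by
          apply mul_le_mul_of_nonneg_left _ (by positivity)
          exact mul_le_mul_of_nonneg_left h5 (by positivity)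
      _ = ((∑ i, |z i - (X *ᵥ β) i|) + C) * (K * p) := by ring
  -- dominating function
  have hdom : Integrable
      (fun β : Fin p → ℝ => Real.exp (C / 2) * ∏ j, Real.exp (-(b/2) * |β j|))
      (volume : Measure (Fin p → ℝ)) := by
    apply Integrable.const_mul
    exact Integrable.fintype_prod (f := fun _ : Fin p => fun t : ℝ => Real.exp (-(b/2) * |t|))
      (fun _ => aux_integrable_exp_neg_abs (by positivity))
  refine hdom.mono' ?_ ?_
  · apply Continuous.aestronglyMeasurable
    have hcont : Continuous fun β : Fin p → ℝ => X *ᵥ β := by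
      exact X.mulVecLin.continuous_of_finiteDimensional
    apply Real.continuous_exp.comp
    apply Continuous.mul continuous_const
    apply continuous_finset_sum
    intro i _
    exact (continuous_const.sub ((continuous_apply i).comp hcont)).abs
  · filter_upwards with β
    rw [Real.norm_eq_abs, abs_of_pos (Real.exp_pos _), ← Real.exp_sum, ← Real.exp_add]
    apply Real.exp_le_exp.mpr
    have hkey := key β
    have hs : C / 2 + ∑ j, -(b / 2) * |β j| = C / 2 - b / 2 * ∑ j, |β j| := by
      rw [← Finset.mul_sum]; ring
    rw [hs]
    linarith
end

section
/- Let p, n ≥ 1 be integers and x₁, x₂, …, x_n ∈ ℝ^p. Then sup over (a₁, …, a_n) ∈ (0,∞)^n of x₁ᵀ ( x₁x₁ᵀ + ∑_{i=2}^n aᵢ xᵢxᵢᵀ + a₁ I_p )⁻² x₁ is finite (when n = 1 the sum ∑_{i=2}^n is empty, so the expression is sup over a > 0 of x₁ᵀ (x₁x₁ᵀ + a I_p)⁻² x₁). -/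
open Matrix

section Stmt15Aux

variable {p k : ℕ}

noncomputable def mat0 (xs : Fin k → Fin p → ℝ) (b : Fin k → ℝ) (a : ℝ) :
    Matrix (Fin p) (Fin p) ℝ :=
  ∑ i, b i • vecMulVec (xs i) (xs i) + a • 1

noncomputable def mat (x : Fin p → ℝ) (xs : Fin k → Fin p → ℝ) (b : Fin k → ℝ) (a : ℝ) :
    Matrix (Fin p) (Fin p) ℝ :=
  vecMulVec x x + mat0 xs b a

lemma vecMulVec_mulVec' (v w u : Fin p → ℝ) : vecMulVec v w *ᵥ u = (w ⬝ᵥ u) • v := by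
  ext i
  simp [vecMulVec_apply, mulVec, dotProduct, Finset.mul_sum, mul_assoc, mul_comm, mul_left_comm]

lemma mat0_mulVec (xs : Fin k → Fin p → ℝ) (b : Fin k → ℝ) (a : ℝ) (z : Fin p → ℝ) :
    mat0 xs b a *ᵥ z = (∑ i, (b i * (xs i ⬝ᵥ z)) • xs i) + a • z := by
  unfold mat0
  rw [Matrix.add_mulVec]
  congr 1
  · rw [show (∑ i, b i • vecMulVec (xs i) (xs i)) *ᵥ z = ∑ i, (b i • vecMulVec (xs i) (xs i)) *ᵥ z by
      ext j
      simp [Matrix.mulVec, dotProduct, Finset.sum_apply, Matrix.sum_apply, Finset.sum_mul]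
      rw [Finset.sum_comm]]
    refine Finset.sum_congr rfl fun i _ => ?_
    rw [Matrix.smul_mulVec, vecMulVec_mulVec', smul_smul]
  · rw [Matrix.smul_mulVec, Matrix.one_mulVec]

lemma mat_mulVec (x : Fin p → ℝ) (xs : Fin k → Fin p → ℝ) (b : Fin k → ℝ) (a : ℝ) (z : Fin p → ℝ) :
    mat x xs b a *ᵥ z = (x ⬝ᵥ z) • x + ((∑ i, (b i * (xs i ⬝ᵥ z)) • xs i) + a • z) := by
  unfold mat
  rw [Matrix.add_mulVec, vecMulVec_mulVec', mat0_mulVec]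

lemma dotProduct_sum' (z : Fin p → ℝ) (v : Fin k → Fin p → ℝ) :
    z ⬝ᵥ (∑ i, v i) = ∑ i, z ⬝ᵥ v i := by
  simp only [dotProduct, Finset.sum_apply, Finset.mul_sum]
  exact Finset.sum_comm

lemma dot_mat0 (xs : Fin k → Fin p → ℝ) (b : Fin k → ℝ) (a : ℝ) (z : Fin p → ℝ) :
    z ⬝ᵥ (mat0 xs b a *ᵥ z) = (∑ i, b i * (xs i ⬝ᵥ z)^2) + a * (z ⬝ᵥ z) := by
  rw [mat0_mulVec, dotProduct_add, dotProduct_sum', dotProduct_smul, smul_eq_mul]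
  congr 1
  refine Finset.sum_congr rfl fun i _ => ?_
  rw [dotProduct_smul, dotProduct_comm z (xs i), smul_eq_mul]
  ring

lemma dot_mat (x : Fin p → ℝ) (xs : Fin k → Fin p → ℝ) (b : Fin k → ℝ) (a : ℝ) (z : Fin p → ℝ) :
    z ⬝ᵥ (mat x xs b a *ᵥ z) = (x ⬝ᵥ z)^2 + ((∑ i, b i * (xs i ⬝ᵥ z)^2) + a * (z ⬝ᵥ z)) := by
  unfold mat
  rw [Matrix.add_mulVec, dotProduct_add, vecMulVec_mulVec', dotProduct_smul, dot_mat0,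
    dotProduct_comm z x, smul_eq_mul]
  ring

lemma dot_self_nonneg (z : Fin p → ℝ) : 0 ≤ z ⬝ᵥ z :=
  Finset.sum_nonneg fun i _ => mul_self_nonneg _

lemma dot_self_pos {z : Fin p → ℝ} (hz : z ≠ 0) : 0 < z ⬝ᵥ z := by
  rcases (dot_self_nonneg z).lt_or_eq with h | h
  · exact h
  · exact absurd ((dotProduct_self_eq_zero).mp h.symm) hz

lemma vecMulVec_transpose' (v w : Fin p → ℝ) : (vecMulVec v w)ᵀ = vecMulVec w v := by
  ext i j
  simp [vecMulVec_apply, mul_comm]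

lemma mat0_transpose (xs : Fin k → Fin p → ℝ) (b : Fin k → ℝ) (a : ℝ) :
    (mat0 xs b a)ᵀ = mat0 xs b a := by
  unfold mat0
  rw [Matrix.transpose_add, Matrix.transpose_smul, Matrix.transpose_one]
  congr 1
  rw [Matrix.transpose_sum]
  refine Finset.sum_congr rfl fun i _ => ?_
  rw [Matrix.transpose_smul, vecMulVec_transpose']

lemma mat_transpose (x : Fin p → ℝ) (xs : Fin k → Fin p → ℝ) (b : Fin k → ℝ) (a : ℝ) :
    (mat x xs b a)ᵀ = mat x xs b a := by
  unfold mat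
  rw [Matrix.transpose_add, mat0_transpose, vecMulVec_transpose']

lemma mat0_isHermitian (xs : Fin k → Fin p → ℝ) (b : Fin k → ℝ) (a : ℝ) :
    (mat0 xs b a).IsHermitian := by
  have h := mat0_transpose xs b a
  unfold Matrix.IsHermitian
  ext i j
  rw [Matrix.conjTranspose_apply, star_trivial]
  conv_lhs => rw [← h]
  rw [Matrix.transpose_apply]

lemma mat_isHermitian (x : Fin p → ℝ) (xs : Fin k → Fin p → ℝ) (b : Fin k → ℝ) (a : ℝ) :
    (mat x xs b a).IsHermitian := by
  have h := mat_transpose x xs b a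
  unfold Matrix.IsHermitian
  ext i j
  rw [Matrix.conjTranspose_apply, star_trivial]
  conv_lhs => rw [← h]
  rw [Matrix.transpose_apply]

lemma mat0_posDef (xs : Fin k → Fin p → ℝ) {b : Fin k → ℝ} {a : ℝ}
    (ha : 0 < a) (hb : ∀ i, 0 < b i) : (mat0 xs b a).PosDef := by
  refine Matrix.PosDef.of_dotProduct_mulVec_pos (mat0_isHermitian xs b a) fun z hz => ?_
  rw [star_trivial, dot_mat0]
  have h1 : 0 ≤ ∑ i, b i * (xs i ⬝ᵥ z)^2 :=
    Finset.sum_nonneg fun i _ => mul_nonneg (hb i).le (sq_nonneg _)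
  have h2 : 0 < a * (z ⬝ᵥ z) := mul_pos ha (dot_self_pos hz)
  linarith

lemma mat_posDef (x : Fin p → ℝ) (xs : Fin k → Fin p → ℝ) {b : Fin k → ℝ} {a : ℝ}
    (ha : 0 < a) (hb : ∀ i, 0 < b i) : (mat x xs b a).PosDef := by
  refine Matrix.PosDef.of_dotProduct_mulVec_pos (mat_isHermitian x xs b a) fun z hz => ?_
  rw [star_trivial, dot_mat]
  have h1 : 0 ≤ ∑ i, b i * (xs i ⬝ᵥ z)^2 :=
    Finset.sum_nonneg fun i _ => mul_nonneg (hb i).le (sq_nonneg _)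
  have h2 : 0 < a * (z ⬝ᵥ z) := mul_pos ha (dot_self_pos hz)
  have h3 : 0 ≤ (x ⬝ᵥ z)^2 := sq_nonneg _
  linarith

lemma sum_dot_sum_le (u : Fin k → Fin p → ℝ) :
    (∑ i, u i) ⬝ᵥ (∑ i, u i) ≤ (k : ℝ) * ∑ i, (u i ⬝ᵥ u i) := by
  have key : ∀ j : Fin p, (∑ i, u i) j * (∑ i, u i) j ≤ (k : ℝ) * ∑ i, u i j * u i j := by
    intro j
    have h1 : (∑ i, u i) j = ∑ i, u i j := by simp
    rw [h1, ← sq]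
    have := sq_sum_le_card_mul_sum_sq (s := (Finset.univ : Finset (Fin k)))
      (f := fun i => u i j)
    simpa [sq] using this
  calc (∑ i, u i) ⬝ᵥ (∑ i, u i) = ∑ j, (∑ i, u i) j * (∑ i, u i) j := rfl
    _ ≤ ∑ j, (k : ℝ) * ∑ i, u i j * u i j := Finset.sum_le_sum fun j _ => key j
    _ = (k : ℝ) * ∑ i, (u i ⬝ᵥ u i) := by
        rw [← Finset.mul_sum]
        congr 1
        rw [Finset.sum_comm]
        rfl

-- The key decomposition identity
lemma key_decomp (x : Fin p → ℝ) (xs : Fin k → Fin p → ℝ) (b : Fin k → ℝ) (a : ℝ)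
    (z : Fin p → ℝ) (r2 T ξ : ℝ) (α : Fin k → ℝ) (xt : Fin k → Fin p → ℝ) (w : Fin p → ℝ)
    (hr2def : r2 = x ⬝ᵥ x) (hr2 : r2 ≠ 0) (hT : T = x ⬝ᵥ z) (hxi : ξ = T / r2)
    (hα : α = fun i => (x ⬝ᵥ xs i) / r2) (hxt : xt = fun i => xs i - α i • x)
    (hw : w = z - ξ • x) :
    mat x xs b a *ᵥ z =
      (T + (∑ i, b i * α i * (xt i ⬝ᵥ w)) + T * (∑ i, b i * (α i)^2) + a * ξ) • x
      + (mat0 xt b a *ᵥ w + T • (∑ i, (b i * α i) • xt i)) := by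
  have hzw : z = w + ξ • x := by rw [hw]; abel
  have hxw : x ⬝ᵥ w = 0 := by
    rw [hw, dotProduct_sub, dotProduct_smul, smul_eq_mul, hxi, hT, ← hr2def]
    field_simp
    ring
  have hxxt : ∀ i, x ⬝ᵥ xt i = 0 := by
    intro i
    simp only [hxt, hα, dotProduct_sub, dotProduct_smul, smul_eq_mul, ← hr2def]
    field_simp
    ring
  have hdz : ∀ i, xs i ⬝ᵥ z = α i * T + xt i ⬝ᵥ w := by
    intro i
    have h1 : xs i = xt i + α i • x := by rw [hxt]; module
    calc xs i ⬝ᵥ z = (xt i + α i • x) ⬝ᵥ (w + ξ • x) := by rw [← h1, ← hzw]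
      _ = xt i ⬝ᵥ w + ξ * (xt i ⬝ᵥ x) + (α i * (x ⬝ᵥ w) + α i * (ξ * (x ⬝ᵥ x))) := by
          simp [add_dotProduct, dotProduct_add, smul_dotProduct, dotProduct_smul, smul_eq_mul]
          ring
      _ = α i * T + xt i ⬝ᵥ w := by
          rw [dotProduct_comm (xt i) x, hxxt i, hxw, hxi, ← hr2def, hT]
          field_simp
          ring
  rw [mat_mulVec, mat0_mulVec]
  have hsum : ∑ i, (b i * (xs i ⬝ᵥ z)) • xs i
      = (∑ i, (b i * (xt i ⬝ᵥ w)) • xt i)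
        + T • (∑ i, (b i * α i) • xt i)
        + (∑ i, b i * α i * (xt i ⬝ᵥ w) + T * ∑ i, b i * (α i)^2) • x := by
    calc ∑ i, (b i * (xs i ⬝ᵥ z)) • xs i
        = ∑ i, ((b i * (xt i ⬝ᵥ w)) • xt i + T • ((b i * α i) • xt i)
            + ((b i * α i * (xt i ⬝ᵥ w)) + T * (b i * (α i)^2)) • x) := by
          refine Finset.sum_congr rfl fun i _ => ?_
          have h1 : xs i = xt i + α i • x := by rw [hxt]; module
          rw [hdz i]
          nth_rewrite 1 [h1]
          module
      _ = _ := by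
          rw [Finset.sum_add_distrib, Finset.sum_add_distrib, ← Finset.smul_sum,
            ← Finset.sum_smul]
          congr 1
          rw [Finset.sum_add_distrib, Finset.mul_sum]
  rw [hsum]
  have haz : a • z = a • w + (a * ξ) • x := by rw [hzw, smul_add, smul_smul]
  rw [haz, ← hT]
  module

lemma spike_zero_case (x : Fin p → ℝ) (xs : Fin k → Fin p → ℝ) {b : Fin k → ℝ} {a : ℝ}
    (ha : 0 < a) (hb : ∀ i, 0 < b i) (hx : x = 0) (z : Fin p → ℝ)
    (hz : mat x xs b a *ᵥ z = x) : z ⬝ᵥ z ≤ 0 := by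
  subst hx
  have h0 : z ⬝ᵥ (mat 0 xs b a *ᵥ z) = 0 := by rw [hz, dotProduct_zero]
  rw [dot_mat] at h0
  have h1 : 0 ≤ ∑ i, b i * (xs i ⬝ᵥ z)^2 :=
    Finset.sum_nonneg fun i _ => mul_nonneg (hb i).le (sq_nonneg _)
  have h2 : ((0 : Fin p → ℝ) ⬝ᵥ z)^2 = 0 := by rw [zero_dotProduct]; ring
  nlinarith [dot_self_nonneg z]

set_option maxHeartbeats 2000000 in
theorem keyF (k : ℕ) : ∀ (d : ℕ) (x : Fin p → ℝ) (xs : Fin k → Fin p → ℝ),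
    Module.finrank ℝ (Submodule.span ℝ (insert x (Set.range xs))) ≤ d →
    ∃ C : ℝ, 0 ≤ C ∧ ∀ (a : ℝ) (b : Fin k → ℝ), 0 < a → (∀ i, 0 < b i) →
      ∀ z : Fin p → ℝ, mat x xs b a *ᵥ z = x → z ⬝ᵥ z ≤ C := by
  intro d
  induction d with
  | zero =>
    intro x xs hrank
    refine ⟨0, le_refl _, fun a b ha hb z hz => ?_⟩
    have hspan : Submodule.span ℝ (insert x (Set.range xs)) = ⊥ :=
      Submodule.finrank_eq_zero.mp (Nat.le_zero.mp hrank)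
    have hx : x = 0 := by
      have hxmem : x ∈ Submodule.span ℝ (insert x (Set.range xs)) :=
        Submodule.subset_span (Set.mem_insert x _)
      rw [hspan] at hxmem
      exact hxmem
    exact spike_zero_case x xs ha hb hx z hz
  | succ d IH =>
    intro x xs hrank
    by_cases hx0 : x = 0
    · exact ⟨0, le_refl _, fun a b ha hb z hz => spike_zero_case x xs ha hb hx0 z hz⟩
    -- main case
    set r2 : ℝ := x ⬝ᵥ x with hr2def
    have hr2pos : 0 < r2 := dot_self_pos hx0
    have hr2 : r2 ≠ 0 := ne_of_gt hr2pos
    set α : Fin k → ℝ := fun i => (x ⬝ᵥ xs i) / r2 with hα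
    set xt : Fin k → Fin p → ℝ := fun i => xs i - α i • x with hxt
    have hxxt : ∀ i, x ⬝ᵥ xt i = 0 := by
      intro i
      simp only [hxt, hα, dotProduct_sub, dotProduct_smul, smul_eq_mul]
      field_simp
      rw [← hr2def]; ring
    clear_value r2 α xt
    -- the span of the projected vectors has smaller rank
    have hrk : Module.finrank ℝ (Submodule.span ℝ (Set.range xt)) ≤ d := by
      set K : Submodule ℝ (Fin p → ℝ) :=
        { carrier := {u | x ⬝ᵥ u = 0}
          add_mem' := by
            intro u v hu hv
            simp only [Set.mem_setOf_eq, dotProduct_add] at *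
            rw [hu, hv, add_zero]
          zero_mem' := by simp
          smul_mem' := by
            intro c u hu
            simp only [Set.mem_setOf_eq, dotProduct_smul, smul_eq_mul] at *
            rw [hu, mul_zero] } with hK
      have hsub : Submodule.span ℝ (Set.range xt) ≤ K := by
        rw [Submodule.span_le]
        rintro _ ⟨i, rfl⟩
        exact hxxt i
      have hxnot : x ∉ Submodule.span ℝ (Set.range xt) := by
        intro hmem
        refine hr2 ?_
        rw [hr2def]
        exact hsub hmem
      have hV : Submodule.span ℝ (Set.range xt) ⊔ Submodule.span ℝ {x}
          ≤ Submodule.span ℝ (insert x (Set.range xs)) := by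
        refine sup_le ?_ ?_
        · rw [Submodule.span_le]
          rintro _ ⟨i, rfl⟩
          rw [hxt]
          refine Submodule.sub_mem _ ?_ ?_
          · exact Submodule.subset_span (Set.mem_insert_of_mem _ ⟨i, rfl⟩)
          · exact Submodule.smul_mem _ _ (Submodule.subset_span (Set.mem_insert x _))
        · rw [Submodule.span_le, Set.singleton_subset_iff]
          exact Submodule.subset_span (Set.mem_insert x _)
      have hlt : Submodule.span ℝ (Set.range xt)
          < Submodule.span ℝ (Set.range xt) ⊔ Submodule.span ℝ {x} := by
        refine lt_of_le_of_ne le_sup_left ?_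
        intro he
        have hx' : x ∈ Submodule.span ℝ (Set.range xt) ⊔ Submodule.span ℝ {x} :=
          Submodule.mem_sup_right (Submodule.mem_span_singleton_self x)
        rw [← he] at hx'
        exact hxnot hx'
      have h1 := Submodule.finrank_lt_finrank_of_lt hlt
      have h2 := Submodule.finrank_mono hV
      omega
    have hrk' : ∀ i : Fin k,
        Module.finrank ℝ (Submodule.span ℝ (insert (xt i) (Set.range xt))) ≤ d := by
      intro i
      rw [Set.insert_eq_self.mpr (Set.mem_range_self i)]
      exact hrk
    choose Cs hCs0 hCs using fun i => IH (xt i) xt (hrk' i)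
    refine ⟨1/r2 + k * ∑ i, (α i)^2 * (4 * Cs i), ?_, ?_⟩
    · have h1 : 0 ≤ ∑ i, (α i)^2 * (4 * Cs i) :=
        Finset.sum_nonneg fun i _ =>
          mul_nonneg (sq_nonneg _) (by linarith [hCs0 i])
      have h2 : 0 ≤ 1/r2 := by positivity
      have h3 : (0:ℝ) ≤ k := Nat.cast_nonneg k
      nlinarith
    intro a b ha hb z hMz
    set T : ℝ := x ⬝ᵥ z with hT
    set ξ : ℝ := T / r2 with hxi
    set w : Fin p → ℝ := z - ξ • x with hw
    set s : ℝ := ∑ i, b i * α i * (xt i ⬝ᵥ w) with hs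
    set A : ℝ := ∑ i, b i * (α i)^2 with hA
    set m1 : Fin p → ℝ := ∑ i, (b i * α i) • xt i with hm1
    have hxw : x ⬝ᵥ w = 0 := by
      rw [hw, dotProduct_sub, dotProduct_smul, smul_eq_mul, hxi]
      field_simp
      rw [hT, hr2def]
      ring
    have KEY := key_decomp x xs b a z r2 T ξ α xt w hr2def hr2 hT hxi hα hxt hw
    rw [hMz, ← hs, ← hA, ← hm1] at KEY
    -- project onto x
    have hxm1 : x ⬝ᵥ m1 = 0 := by
      rw [hm1, dotProduct_sum']
      refine Finset.sum_eq_zero fun i _ => ?_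
      rw [dotProduct_smul, hxxt i, smul_eq_mul, mul_zero]
    have hxMt : x ⬝ᵥ (mat0 xt b a *ᵥ w) = 0 := by
      rw [mat0_mulVec, dotProduct_add, dotProduct_sum', dotProduct_smul, hxw]
      rw [smul_eq_mul, mul_zero, add_zero]
      refine Finset.sum_eq_zero fun i _ => ?_
      rw [dotProduct_smul, hxxt i, smul_eq_mul, mul_zero]
    have hc : T + s + T * A + a * ξ = 1 := by
      have h1 := congrArg (fun v => x ⬝ᵥ v) KEY.symm
      simp only [dotProduct_add, dotProduct_smul, smul_eq_mul, hxm1, hxMt, mul_zero,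
        add_zero] at h1
      rw [← hr2def] at h1
      refine mul_right_cancel₀ hr2 ?_
      rw [one_mul]
      exact h1
    have hE2 : mat0 xt b a *ᵥ w + T • m1 = 0 := by
      have h1 : (T + s + T * A + a * ξ) • x = (1:ℝ) • x := by rw [hc]
      rw [h1, one_smul] at KEY
      exact (add_eq_left).mp KEY.symm
    -- scalar quantities
    set Q : ℝ := w ⬝ᵥ (mat0 xt b a *ᵥ w) with hQ
    clear_value T ξ w s A m1 Q
    have hwm1 : w ⬝ᵥ m1 = s := by
      rw [hm1, dotProduct_sum', hs]
      refine Finset.sum_congr rfl fun i _ => ?_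
      rw [dotProduct_smul, smul_eq_mul, dotProduct_comm w (xt i)]
    have hQs : Q = -(T * s) := by
      have h1 : mat0 xt b a *ᵥ w = -(T • m1) := eq_neg_of_add_eq_zero_left hE2
      rw [hQ, h1, dotProduct_neg, dotProduct_smul, smul_eq_mul, hwm1]
    have hQform : Q = (∑ i, b i * (xt i ⬝ᵥ w)^2) + a * (w ⬝ᵥ w) := by
      rw [hQ]; exact dot_mat0 xt b a w
    have hsum0 : 0 ≤ ∑ i, b i * (xt i ⬝ᵥ w)^2 :=
      Finset.sum_nonneg fun i _ => mul_nonneg (hb i).le (sq_nonneg _)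
    have haww : 0 ≤ a * (w ⬝ᵥ w) := mul_nonneg ha.le (dot_self_nonneg w)
    have hQ0 : 0 ≤ Q := by rw [hQform]; linarith
    have hA0 : 0 ≤ A := by
      rw [hA]
      exact Finset.sum_nonneg fun i _ => mul_nonneg (hb i).le (sq_nonneg _)
    have hCS : s^2 ≤ A * ∑ i, b i * (xt i ⬝ᵥ w)^2 := by
      have h1 := Finset.sum_mul_sq_le_sq_mul_sq Finset.univ
        (fun i => Real.sqrt (b i) * α i) (fun i => Real.sqrt (b i) * (xt i ⬝ᵥ w))
      have e1 : ∑ i, (Real.sqrt (b i) * α i) * (Real.sqrt (b i) * (xt i ⬝ᵥ w)) = s := by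
        rw [hs]
        refine Finset.sum_congr rfl fun i _ => ?_
        have : Real.sqrt (b i) * Real.sqrt (b i) = b i := Real.mul_self_sqrt (hb i).le
        calc (Real.sqrt (b i) * α i) * (Real.sqrt (b i) * (xt i ⬝ᵥ w))
            = (Real.sqrt (b i) * Real.sqrt (b i)) * (α i * (xt i ⬝ᵥ w)) := by ring
          _ = b i * α i * (xt i ⬝ᵥ w) := by rw [this]; ring
      have e2 : ∑ i, (Real.sqrt (b i) * α i)^2 = A := by
        rw [hA]
        refine Finset.sum_congr rfl fun i _ => ?_
        rw [mul_pow, Real.sq_sqrt (hb i).le]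
      have e3 : ∑ i, (Real.sqrt (b i) * (xt i ⬝ᵥ w))^2 = ∑ i, b i * (xt i ⬝ᵥ w)^2 := by
        refine Finset.sum_congr rfl fun i _ => ?_
        rw [mul_pow, Real.sq_sqrt (hb i).le]
      rw [e1, e2, e3] at h1
      exact h1
    have hCSQ : s^2 ≤ A * Q := by
      have : A * ∑ i, b i * (xt i ⬝ᵥ w)^2 ≤ A * Q := by
        apply mul_le_mul_of_nonneg_left _ hA0
        rw [hQform]; linarith
      linarith
    have hT0 : 0 ≤ T := by
      have h1 : z ⬝ᵥ (mat x xs b a *ᵥ z) = T := by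
        rw [hMz, hT]
        exact dotProduct_comm z x
      rw [dot_mat] at h1
      have h2 : 0 ≤ ∑ i, b i * (xs i ⬝ᵥ z)^2 :=
        Finset.sum_nonneg fun i _ => mul_nonneg (hb i).le (sq_nonneg _)
      nlinarith [sq_nonneg (x ⬝ᵥ z), mul_nonneg ha.le (dot_self_nonneg z)]
    have hTpos : 0 < T := by
      rcases hT0.lt_or_eq with h | h
      · exact h
      · exfalso
        have hT' : T = 0 := h.symm
        have hξ0 : ξ = 0 := by rw [hxi, hT', zero_div]
        have hQ0' : Q = 0 := by rw [hQs, hT']; ring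
        have hs2 : s^2 ≤ 0 := by rw [hQ0'] at hCSQ; linarith [hCSQ]
        have hs0 : s = 0 := by
          have h1 : s^2 = 0 := le_antisymm hs2 (sq_nonneg s)
          exact pow_eq_zero_iff two_ne_zero |>.mp h1
        rw [hT', hξ0, hs0] at hc
        simp at hc
    have hξpos : 0 < ξ := by rw [hxi]; exact div_pos hTpos hr2pos
    have hQA : Q ≤ A * T^2 := by
      rcases hQ0.lt_or_eq with h | h
      · have h1 : Q^2 = T^2 * s^2 := by rw [hQs]; ring
        have h2 : T^2 * s^2 ≤ T^2 * (A * Q) :=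
          mul_le_mul_of_nonneg_left hCSQ (sq_nonneg T)
        nlinarith [h1, h2, h]
      · rw [← h]
        exact mul_nonneg hA0 (sq_nonneg T)
    have haξ : 0 ≤ a * ξ := mul_nonneg ha.le hξpos.le
    have hT1 : T ≤ 1 := by
      have h1 : T * (T + s + T * A + a * ξ) = T := by rw [hc]; ring
      have h2 : T * s = -Q := by rw [hQs]; ring
      have h3 : T^2 + T^2*A + T*(a*ξ) = T + Q := by linear_combination h1 - h2
      have h4 : T^2 + T*(a*ξ) ≤ T := by nlinarith [hQA, h3]
      have h5 : T^2 ≤ T := by nlinarith [mul_nonneg hTpos.le haξ]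
      nlinarith [hTpos]
    have hT2 : T^2 ≤ 1 := by nlinarith [hTpos, hT1]
    -- invertibility of mat0 xt b a
    have hpd : (mat0 xt b a).PosDef := mat0_posDef xt ha hb
    have hU : IsUnit (mat0 xt b a) := hpd.isUnit
    have hsurj : Function.Surjective (mat0 xt b a).mulVec :=
      Matrix.mulVec_surjective_iff_isUnit.mpr hU
    have hinj : Function.Injective (mat0 xt b a).mulVec :=
      Matrix.mulVec_injective_iff_isUnit.mpr hU
    choose W hW using fun i => hsurj (b i • xt i)
    have hwW : w = ∑ i, (-(T * α i)) • W i := by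
      apply hinj
      show mat0 xt b a *ᵥ w = mat0 xt b a *ᵥ _
      have hMt : mat0 xt b a *ᵥ (∑ i, (-(T * α i)) • W i)
          = ∑ i, (-(T * α i)) • (mat0 xt b a *ᵥ W i) := by
        simp only [← Matrix.mulVecLin_apply, map_sum, LinearMap.map_smul]
      rw [hMt]
      have h1 : mat0 xt b a *ᵥ w = -(T • m1) := eq_neg_of_add_eq_zero_left hE2
      rw [h1, hm1, Finset.smul_sum, ← Finset.sum_neg_distrib]
      refine Finset.sum_congr rfl fun i _ => ?_
      rw [hW i]
      module
    have hWW : ∀ i, W i ⬝ᵥ W i ≤ 4 * Cs i := by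
      intro i
      have hbi := hb i
      have hbine : b i ≠ 0 := ne_of_gt hbi
      set c : Fin k → ℝ := fun j => if j = i then 1 else 2 * b j / b i with hcdef
      have hcpos : ∀ j, 0 < c j := by
        intro j
        rw [hcdef]
        dsimp only
        split
        · exact one_pos
        · exact div_pos (mul_pos two_pos (hb j)) hbi
      have ha' : 0 < 2 * a / b i := by positivity
      have hMN : mat (xt i) xt c (2 * a / b i) = (2 / b i) • mat0 xt b a := by
        unfold mat mat0
        have e1 : (2 / b i) • ((∑ j, b j • vecMulVec (xt j) (xt j))
              + a • (1 : Matrix (Fin p) (Fin p) ℝ))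
            = (∑ j, ((2 / b i) * b j) • vecMulVec (xt j) (xt j)) + ((2 / b i) * a) • 1 := by
          rw [smul_add, Finset.smul_sum, smul_smul]
          congr 1
          exact Finset.sum_congr rfl fun j _ => (smul_smul _ _ _)
        rw [e1]
        have e2 : (∑ j, ((2 / b i) * b j) • vecMulVec (xt j) (xt j))
              - (∑ j, c j • vecMulVec (xt j) (xt j))
            = vecMulVec (xt i) (xt i) := by
          rw [← Finset.sum_sub_distrib]
          have e3 : ∀ j, ((2 / b i) * b j) • vecMulVec (xt j) (xt j)
              - c j • vecMulVec (xt j) (xt j)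
              = ((2 / b i) * b j - c j) • vecMulVec (xt j) (xt j) := by
            intro j
            rw [sub_smul]
          rw [Finset.sum_congr rfl fun j _ => e3 j]
          rw [Finset.sum_eq_single i]
          · have hci : c i = 1 := by rw [hcdef]; simp
            rw [hci, show (2 / b i * b i - 1 : ℝ) = 1 by field_simp <;> ring, one_smul]
          · intro j _ hji
            have hcj : c j = 2 * b j / b i := by rw [hcdef]; simp [hji]
            rw [hcj, show (2 / b i * b j - 2 * b j / b i : ℝ) = 0 by field_simp <;> ring,
              zero_smul]
          · intro habs
            exact absurd (Finset.mem_univ i) habs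
        have e4 : (2 * a / b i : ℝ) = (2 / b i) * a := by ring
        rw [e4]
        rw [← e2]
        abel
      have happ : mat (xt i) xt c (2 * a / b i) *ᵥ ((2⁻¹ : ℝ) • W i) = xt i := by
        rw [hMN, Matrix.smul_mulVec, Matrix.mulVec_smul, hW i, smul_smul, smul_smul]
        rw [show (2 / b i * 2⁻¹ * b i : ℝ) = 1 by field_simp <;> ring]
        exact one_smul _ _
      have hle := hCs i (2 * a / b i) c ha' hcpos ((2⁻¹ : ℝ) • W i) happ
      have e5 : ((2⁻¹ : ℝ) • W i) ⬝ᵥ ((2⁻¹ : ℝ) • W i) = 4⁻¹ * (W i ⬝ᵥ W i) := by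
        rw [smul_dotProduct, dotProduct_smul, smul_eq_mul, smul_eq_mul]
        ring
      rw [e5] at hle
      linarith
    -- final assembly
    have hzw' : z = w + ξ • x := by rw [hw]; module
    have hzz : z ⬝ᵥ z = w ⬝ᵥ w + ξ^2 * r2 := by
      rw [hzw']
      rw [dotProduct_add, add_dotProduct, add_dotProduct, dotProduct_smul, smul_dotProduct,
        smul_dotProduct, dotProduct_smul, dotProduct_comm w x, hxw]
      rw [← hr2def]
      simp only [smul_eq_mul]
      ring
    have hwub : w ⬝ᵥ w ≤ k * ∑ i, (α i)^2 * (4 * Cs i) := by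
      rw [hwW]
      refine le_trans (sum_dot_sum_le _) ?_
      refine mul_le_mul_of_nonneg_left (Finset.sum_le_sum fun i _ => ?_) (Nat.cast_nonneg k)
      have e1 : ((-(T * α i)) • W i) ⬝ᵥ ((-(T * α i)) • W i)
          = T^2 * ((α i)^2 * (W i ⬝ᵥ W i)) := by
        rw [smul_dotProduct, dotProduct_smul, smul_eq_mul, smul_eq_mul]
        ring
      rw [e1]
      have h3 := dot_self_nonneg (W i)
      nlinarith [mul_nonneg (sub_nonneg.mpr hT2) (mul_nonneg (sq_nonneg (α i)) h3),
        mul_nonneg (sq_nonneg (α i)) (sub_nonneg.mpr (hWW i))]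
    have hxir2 : ξ^2 * r2 ≤ 1 / r2 := by
      have e1 : ξ^2 * r2 = T^2 / r2 := by
        rw [hxi]
        field_simp
      rw [e1]
      exact (div_le_div_iff_of_pos_right hr2pos).mpr hT2
    linarith [hzz, hwub, hxir2]


end Stmt15Aux

/-- Lemma 3, Appendix C. Fix `x₁, x₂, …, x_n ∈ ℝ^p` (here `x₁ = x1` and
`x₂, …, x_n` are given by `xs : Fin k → ℝ^p` with `n = k + 1 ≥ 1`, so `k = 0` is the case
`n = 1` with an empty sum).  Then
`sup over (a₁, …, a_n) ∈ (0,∞)^n of x₁ᵀ (x₁x₁ᵀ + ∑_{i=2}^n aᵢ xᵢxᵢᵀ + a₁ I_p)⁻² x₁`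
is finite. -/
theorem stmt15 (p k : ℕ) (hp : 1 ≤ p) (x1 : Fin p → ℝ) (xs : Fin k → Fin p → ℝ) :
    ∃ C : ℝ, ∀ (a : ℝ) (b : Fin k → ℝ), 0 < a → (∀ i, 0 < b i) →
      x1 ⬝ᵥ
        ((((Matrix.vecMulVec x1 x1 + ∑ i, b i • Matrix.vecMulVec (xs i) (xs i)
              + a • (1 : Matrix (Fin p) (Fin p) ℝ))⁻¹ *
            (Matrix.vecMulVec x1 x1 + ∑ i, b i • Matrix.vecMulVec (xs i) (xs i)
              + a • (1 : Matrix (Fin p) (Fin p) ℝ))⁻¹)) *ᵥ x1)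
        ≤ C := by
  obtain ⟨C, _hC0, hC⟩ := keyF k
    (Module.finrank ℝ (Submodule.span ℝ (insert x1 (Set.range xs)))) x1 xs (le_refl _)
  refine ⟨C, ?_⟩
  intro a b ha hb
  have hMeq : Matrix.vecMulVec x1 x1 + ∑ i, b i • Matrix.vecMulVec (xs i) (xs i)
      + a • (1 : Matrix (Fin p) (Fin p) ℝ) = mat x1 xs b a := by
    unfold mat mat0
    rw [add_assoc]
  rw [hMeq]
  have hpd : (mat x1 xs b a).PosDef := mat_posDef x1 xs ha hb
  have hdet : IsUnit (mat x1 xs b a).det := isUnit_iff_ne_zero.mpr hpd.det_pos.ne'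
  have hMM : mat x1 xs b a * (mat x1 xs b a)⁻¹ = 1 := Matrix.mul_nonsing_inv _ hdet
  have hMz : mat x1 xs b a *ᵥ ((mat x1 xs b a)⁻¹ *ᵥ x1) = x1 := by
    rw [Matrix.mulVec_mulVec, hMM, Matrix.one_mulVec]
  have htrans : ((mat x1 xs b a)⁻¹)ᵀ = (mat x1 xs b a)⁻¹ := by
    rw [Matrix.transpose_nonsing_inv, mat_transpose]
  have hexpr : x1 ⬝ᵥ (((mat x1 xs b a)⁻¹ * (mat x1 xs b a)⁻¹) *ᵥ x1)
      = ((mat x1 xs b a)⁻¹ *ᵥ x1) ⬝ᵥ ((mat x1 xs b a)⁻¹ *ᵥ x1) := by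
    rw [← Matrix.mulVec_mulVec, Matrix.dotProduct_mulVec]
    congr 1
    rw [← htrans, Matrix.vecMul_transpose, htrans]
  rw [hexpr]
  exact hC a b ha hb _ hMz
end

section
/- Let m ≥ p ≥ 1, let X ∈ ℝ^{m×p} have full column rank p with rows x₁ᵀ, …, x_mᵀ, and let z ∈ ℝ^m. For y ∈ (0,∞)^m let D(y) be the diagonal matrix with i-th diagonal entry 1/yᵢ. Then sup over y ∈ (0,∞)^m of ‖(Xᵀ D(y) X)⁻¹ Xᵀ D(y) z‖₂ is finite; in fact for every i and every y ∈ (0,∞)^m, xᵢᵀ ( xᵢxᵢᵀ + ∑_{j≠i} (yᵢ/y_j) x_j x_jᵀ )⁻² xᵢ ≤ Cᵢ(X) for a finite constant Cᵢ(X) depending only on X, and ‖(Xᵀ D(y) X)⁻¹ Xᵀ D(y) z‖₂ ≤ ∑_{i=1}^m |zᵢ| √(Cᵢ(X)). -/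
open Matrix

lemma ordEmbCongr {α : Type*} [LinearOrder α] {k : ℕ} {S T : Finset α}
    (h1 : S.card = k) (h2 : T.card = k) (h : S = T) :
    S.orderEmbOfFin h1 = T.orderEmbOfFin h2 := by subst h; rfl

lemma image_ord {m k : ℕ} (S : Finset (Fin m)) (h : S.card = k) :
    Finset.univ.image (S.orderEmbOfFin h) = S := by
  ext j
  simp only [Finset.mem_image, Finset.mem_univ, true_and]
  constructor
  · rintro ⟨i, rfl⟩; exact S.orderEmbOfFin_mem h i
  · intro hj
    have : j ∈ Set.range (S.orderEmbOfFin h) := by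
      rw [Finset.range_orderEmbOfFin]; exact hj
    exact this

lemma prod_ord {m k : ℕ} (S : Finset (Fin m)) (h : S.card = k) (f : Fin m → ℝ) :
    ∏ i : Fin k, f (S.orderEmbOfFin h i) = ∏ j ∈ S, f j := by
  refine Finset.prod_bij (fun (i : Fin k) _ => S.orderEmbOfFin h i)
    (fun i _ => S.orderEmbOfFin_mem h i)
    (fun a _ b _ hab => (S.orderEmbOfFin h).injective hab) ?_ (fun _ _ => rfl)
  intro j hj
  have : j ∈ Set.range (S.orderEmbOfFin h) := by
    rw [Finset.range_orderEmbOfFin]; exact hj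
  obtain ⟨i, hi⟩ := this
  exact ⟨i, Finset.mem_univ i, hi⟩

lemma group18 {m p : ℕ} (F : (Fin p → Fin m) → ℝ) :
    ∑ φ ∈ Finset.univ.filter (fun φ : Fin p → Fin m => Function.Injective φ), F φ
      = ∑ x : {S : Finset (Fin m) // S.card = p} × Equiv.Perm (Fin p),
          F (fun r => x.1.1.orderEmbOfFin x.1.2 (x.2 r)) := by
  symm
  refine Finset.sum_bij'
    (i := fun x _ => fun r => x.1.1.orderEmbOfFin x.1.2 (x.2 r))
    (j := fun φ hφ =>
      have hφi : Function.Injective φ := (Finset.mem_filter.mp hφ).2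
      have hS : (Finset.univ.image φ).card = p := by
        rw [Finset.card_image_of_injective _ hφi, Finset.card_univ, Fintype.card_fin]
      (⟨⟨Finset.univ.image φ, hS⟩,
        (Equiv.ofBijective (fun r => (⟨φ r, Finset.mem_image_of_mem φ (Finset.mem_univ r)⟩ :
            {x // x ∈ Finset.univ.image φ}))
          (by
            rw [Fintype.bijective_iff_injective_and_card]
            refine ⟨fun a b hab => hφi (congrArg Subtype.val hab), ?_⟩
            rw [Fintype.card_coe, hS, Fintype.card_fin])).trans
          ((Finset.univ.image φ).orderIsoOfFin hS).symm.toEquiv⟩)) ?_ ?_ ?_ ?_ ?_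
  · intro x _
    rw [Finset.mem_filter]
    exact ⟨Finset.mem_univ _,
      fun a b hab => x.2.injective ((x.1.1.orderEmbOfFin x.1.2).injective hab)⟩
  · intro φ hφ; exact Finset.mem_univ _
  · -- left inverse : j (i x) = x
    rintro ⟨⟨S, hS⟩, σ⟩ _
    have himg : Finset.univ.image (fun r => S.orderEmbOfFin hS (σ r)) = S := by
      have h1 : (fun r => S.orderEmbOfFin hS (σ r)) = (S.orderEmbOfFin hS) ∘ σ := rfl
      rw [h1, ← Finset.image_image, Finset.image_univ_equiv, image_ord]
    refine Prod.ext (Subtype.ext himg) ?_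
    refine Equiv.ext fun r => ?_
    simp only [Equiv.trans_apply, Equiv.ofBijective_apply, OrderIso.toEquiv_symm,
      RelIso.coe_fn_toEquiv]
    rw [Equiv.symm_apply_eq]
    refine Subtype.ext ?_
    rw [RelIso.coe_fn_toEquiv, Finset.coe_orderIsoOfFin_apply]
    exact (congrFun (congrArg DFunLike.coe (ordEmbCongr _ hS himg)) (σ r)).symm
  · -- right inverse : i (j φ) = φ
    intro φ hφ
    funext r
    simp only [Equiv.trans_apply, Equiv.ofBijective_apply, OrderIso.toEquiv_symm,
      RelIso.coe_fn_toEquiv]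
    rw [← Finset.coe_orderIsoOfFin_apply]
    exact congrArg Subtype.val (OrderIso.apply_symm_apply _ _)
  · intro x _; rfl

lemma entry18 {m p : ℕ} (U V : Matrix (Fin m) (Fin p) ℝ) (d : Fin m → ℝ)
    (r l : Fin p) : (Uᵀ * Matrix.diagonal d * V) r l = ∑ j, U j r * d j * V j l := by
  rw [Matrix.mul_assoc, Matrix.mul_apply]
  simp [Matrix.diagonal_mul, mul_assoc]

lemma expand18 {m p : ℕ} (U V : Matrix (Fin m) (Fin p) ℝ) (d : Fin m → ℝ) :
    (Uᵀ * Matrix.diagonal d * V).det =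
      ∑ φ : Fin p → Fin m,
        (∏ i, U (φ i) i * d (φ i)) * (V.submatrix φ id).det := by
  have hrow : (Uᵀ * Matrix.diagonal d * V) =
      Matrix.of fun r => ∑ j, (U j r * d j) • V j := by
    ext r l
    rw [entry18]
    simp [Finset.sum_apply]
  have hsum := (Matrix.detRowAlternating (R := ℝ) (n := Fin p)).toMultilinearMap.map_sum
    (g := fun i j => (U j i * d j) • V j)
  rw [AlternatingMap.coe_multilinearMap] at hsum
  rw [hrow]
  show (Matrix.detRowAlternating fun r => ∑ j, (U j r * d j) • V j) = _
  rw [hsum]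
  refine Finset.sum_congr rfl fun φ _ => ?_
  have hsmul := (Matrix.detRowAlternating (R := ℝ) (n := Fin p)).toMultilinearMap.map_smul_univ
    (fun i => U (φ i) i * d (φ i)) (fun i => V (φ i))
  rw [AlternatingMap.coe_multilinearMap] at hsmul
  rw [hsmul]
  rfl
lemma cauchyBinet18 {m p : ℕ} (U V : Matrix (Fin m) (Fin p) ℝ) (d : Fin m → ℝ) :
    (Uᵀ * Matrix.diagonal d * V).det =
      ∑ S : {S : Finset (Fin m) // S.card = p},
        (∏ j ∈ S.1, d j) *
          ((U.submatrix (S.1.orderEmbOfFin S.2) id).det *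
           (V.submatrix (S.1.orderEmbOfFin S.2) id).det) := by
  classical
  rw [expand18, ← Finset.sum_filter_add_sum_filter_not Finset.univ
      (fun φ : Fin p → Fin m => Function.Injective φ)]
  have hz : ∑ φ ∈ Finset.univ.filter
      (fun φ : Fin p → Fin m => ¬ Function.Injective φ),
      (∏ i, U (φ i) i * d (φ i)) * (V.submatrix φ id).det = 0 := by
    refine Finset.sum_eq_zero fun φ hφ => ?_
    obtain ⟨a, b, hab, hne⟩ := Function.not_injective_iff.mp (Finset.mem_filter.mp hφ).2
    have : (V.submatrix φ id).det = 0 := by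
      refine Matrix.det_zero_of_row_eq hne ?_
      funext j
      simp [Matrix.submatrix_apply, hab]
    rw [this, mul_zero]
  rw [hz, add_zero,
    group18 (fun φ => (∏ i, U (φ i) i * d (φ i)) * (V.submatrix φ id).det),
    Fintype.sum_prod_type]
  refine Finset.sum_congr rfl fun S _ => ?_
  have key : ∀ σ : Equiv.Perm (Fin p),
      (∏ i, U (S.1.orderEmbOfFin S.2 (σ i)) i * d (S.1.orderEmbOfFin S.2 (σ i))) *
        (V.submatrix (fun r => S.1.orderEmbOfFin S.2 (σ r)) id).det
      = ((Equiv.Perm.sign σ : ℤ) * ∏ i, U (S.1.orderEmbOfFin S.2 (σ i)) i) *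
          ((∏ j ∈ S.1, d j) * (V.submatrix (S.1.orderEmbOfFin S.2) id).det) := by
    intro σ
    have hsub : (V.submatrix (fun r => S.1.orderEmbOfFin S.2 (σ r)) id)
        = (V.submatrix (S.1.orderEmbOfFin S.2) id).submatrix σ id := rfl
    rw [hsub, Matrix.det_permute, Finset.prod_mul_distrib,
      Equiv.prod_comp σ (fun i => d (S.1.orderEmbOfFin S.2 i)), prod_ord]
    push_cast
    ring
  calc ∑ σ : Equiv.Perm (Fin p),
      (∏ i, U (S.1.orderEmbOfFin S.2 (σ i)) i * d (S.1.orderEmbOfFin S.2 (σ i))) *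
        (V.submatrix (fun r => S.1.orderEmbOfFin S.2 (σ r)) id).det
      = (∑ σ : Equiv.Perm (Fin p),
          (Equiv.Perm.sign σ : ℤ) * ∏ i, U (S.1.orderEmbOfFin S.2 (σ i)) i) *
          ((∏ j ∈ S.1, d j) * (V.submatrix (S.1.orderEmbOfFin S.2) id).det) := by
        rw [Finset.sum_mul]
        exact Finset.sum_congr rfl fun σ _ => key σ
    _ = (U.submatrix (S.1.orderEmbOfFin S.2) id).det *
          ((∏ j ∈ S.1, d j) * (V.submatrix (S.1.orderEmbOfFin S.2) id).det) := by
        congr 1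
        rw [Matrix.det_apply']; rfl
    _ = _ := by ring


lemma mulVecInj18 {m p : ℕ} (X : Matrix (Fin m) (Fin p) ℝ) (hrank : X.rank = p) :
    ∀ v : Fin p → ℝ, X *ᵥ v = 0 → v = 0 := by
  have h1 := LinearMap.finrank_range_add_finrank_ker X.mulVecLin
  have h2 : Module.finrank ℝ (LinearMap.range X.mulVecLin) = p := hrank
  have h3 : Module.finrank ℝ (Fin p → ℝ) = p := by simp
  rw [h2, h3] at h1
  have h4 : LinearMap.ker X.mulVecLin = ⊥ := by
    apply Submodule.finrank_eq_zero.mp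
    omega
  intro v hv
  have : v ∈ LinearMap.ker X.mulVecLin := by
    simp only [LinearMap.mem_ker, Matrix.mulVecLin_apply]
    exact hv
  rw [h4] at this
  simpa using this

lemma posdef18 {m p : ℕ} (X : Matrix (Fin m) (Fin p) ℝ) (hrank : X.rank = p)
    (d : Fin m → ℝ) (hd : ∀ j, 0 < d j) :
    (Xᵀ * Matrix.diagonal d * X).PosDef := by
  rw [Matrix.posDef_iff_dotProduct_mulVec]
  constructor
  · show _ᴴ = _
    rw [Matrix.conjTranspose_eq_transpose_of_trivial, Matrix.transpose_mul,
      Matrix.transpose_mul, Matrix.transpose_transpose, Matrix.diagonal_transpose,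
      Matrix.mul_assoc]
  · intro x hx
    have hstar : star x = x := by simp
    rw [hstar]
    have hmv : (Xᵀ * Matrix.diagonal d * X) *ᵥ x
        = Xᵀ *ᵥ (Matrix.diagonal d *ᵥ (X *ᵥ x)) := by
      rw [Matrix.mulVec_mulVec, Matrix.mulVec_mulVec, Matrix.mul_assoc]
    rw [hmv, Matrix.dotProduct_mulVec, Matrix.vecMul_transpose]
    set u : Fin m → ℝ := X *ᵥ x with hu
    have hune : u ≠ 0 := fun h => hx (mulVecInj18 X hrank x h)
    have : Matrix.diagonal d *ᵥ u = fun j => d j * u j := by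
      funext j; rw [Matrix.mulVec_diagonal]
    rw [this]
    obtain ⟨j0, hj0⟩ : ∃ j, u j ≠ 0 := by
      by_contra h
      push_neg at h
      exact hune (funext h)
    refine Finset.sum_pos' (fun j _ => ?_) ⟨j0, Finset.mem_univ j0, ?_⟩
    · show 0 ≤ u j * (d j * u j)
      have := (hd j).le
      nlinarith [sq_nonneg (u j)]
    · show 0 < u j0 * (d j0 * u j0)
      have h1 := hd j0
      rcases hj0.lt_or_gt with h | h
      · nlinarith [mul_pos h1 (mul_pos_of_neg_of_neg h h)]
      · nlinarith [mul_pos h1 (mul_pos h h)]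

lemma key18 {m p : ℕ} (X : Matrix (Fin m) (Fin p) ℝ) (hrank : X.rank = p) (z : Fin m → ℝ) :
    ∃ K : ℝ, 0 ≤ K ∧ ∀ d : Fin m → ℝ, (∀ j, 0 < d j) → ∀ k,
      |((Xᵀ * Matrix.diagonal d * X)⁻¹ *ᵥ ((Xᵀ * Matrix.diagonal d) *ᵥ z)) k| ≤ K := by
  classical
  set dX : {S : Finset (Fin m) // S.card = p} → ℝ :=
    fun S => (X.submatrix (S.1.orderEmbOfFin S.2) id).det with hdX
  set c : Fin p → {S : Finset (Fin m) // S.card = p} → ℝ := fun k S =>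
    if (dX S) = 0 then 0
    else |(((X.updateCol k z).submatrix (S.1.orderEmbOfFin S.2) id)).det| / |dX S|
    with hc
  have hcnn : ∀ k S, 0 ≤ c k S := by
    intro k S
    rw [hc]
    dsimp only
    split
    · exact le_rfl
    · positivity
  refine ⟨∑ k, ∑ S, c k S, ?_, ?_⟩
  · exact Finset.sum_nonneg fun k _ => Finset.sum_nonneg fun S _ => hcnn k S
  intro d hd k
  set A := Xᵀ * Matrix.diagonal d * X with hA
  set b := (Xᵀ * Matrix.diagonal d) *ᵥ z with hb
  set w := A⁻¹ *ᵥ b with hw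
  have hpd := posdef18 X hrank d hd
  have hdetpos : 0 < A.det := hpd.det_pos
  have hu : IsUnit A.det := (ne_of_gt hdetpos).isUnit
  have h1 : A *ᵥ w = b := by
    rw [hw, Matrix.mulVec_mulVec, Matrix.mul_nonsing_inv A hu, Matrix.one_mulVec]
  have h2 : Matrix.cramer A b = A.det • w := by
    rw [← h1, Matrix.cramer_eq_adjugate_mulVec, Matrix.mulVec_mulVec,
      Matrix.adjugate_mul, Matrix.smul_mulVec, Matrix.one_mulVec]
  have h3 : w k = A.det⁻¹ * (A.updateCol k b).det := by
    have := congrFun h2 k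
    rw [Matrix.cramer_apply] at this
    rw [this]
    simp only [Pi.smul_apply, smul_eq_mul]
    field_simp
  have hmat : (A.updateCol k b).det
      = ((X.updateCol k z)ᵀ * Matrix.diagonal d * X).det := by
    rw [← Matrix.det_transpose (A.updateCol k b)]
    congr 1
    ext i j
    rw [Matrix.transpose_apply, entry18, Matrix.updateCol_apply]
    by_cases hik : i = k
    · subst hik
      rw [if_pos rfl, hb]
      simp only [Matrix.mulVec, dotProduct, Matrix.mul_diagonal,
        Matrix.transpose_apply, Matrix.updateCol_self]
      exact Finset.sum_congr rfl fun l _ => by ring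
    · rw [if_neg hik, hA, entry18]
      refine Finset.sum_congr rfl fun l _ => ?_
      rw [Matrix.updateCol_apply, if_neg hik]
      ring
  have hprodnn : ∀ S : {S : Finset (Fin m) // S.card = p}, (0:ℝ) ≤ ∏ j ∈ S.1, d j :=
    fun S => Finset.prod_nonneg fun j _ => (hd j).le
  have hdXnn : ∀ S : {S : Finset (Fin m) // S.card = p},
      (0:ℝ) ≤ (∏ j ∈ S.1, d j) * (dX S * dX S) :=
    fun S => mul_nonneg (hprodnn S) (mul_self_nonneg _)
  have hterm : ∀ S : {S : Finset (Fin m) // S.card = p},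
      |(∏ j ∈ S.1, d j) *
        (((X.updateCol k z).submatrix (S.1.orderEmbOfFin S.2) id).det * dX S)|
      ≤ c k S * ((∏ j ∈ S.1, d j) * (dX S * dX S)) := by
    intro S
    by_cases h0 : dX S = 0
    · rw [h0]
      simp
    · have hceq : c k S
          = |((X.updateCol k z).submatrix (S.1.orderEmbOfFin S.2) id).det| / |dX S| := by
        rw [hc]
        dsimp only
        rw [if_neg h0]
      rw [hceq, abs_mul, abs_mul, abs_of_nonneg (hprodnn S)]
      have habs : 0 < |dX S| := abs_pos.mpr h0
      refine le_of_eq ?_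
      rw [← abs_mul_abs_self (dX S)]
      field_simp
  have hnumabs : |((X.updateCol k z)ᵀ * Matrix.diagonal d * X).det|
      ≤ (∑ S, c k S) * A.det := by
    rw [cauchyBinet18]
    calc |∑ S : {S : Finset (Fin m) // S.card = p}, (∏ j ∈ S.1, d j) *
            (((X.updateCol k z).submatrix (S.1.orderEmbOfFin S.2) id).det *
              (X.submatrix (S.1.orderEmbOfFin S.2) id).det)|
        ≤ ∑ S : {S : Finset (Fin m) // S.card = p}, |(∏ j ∈ S.1, d j) *
            (((X.updateCol k z).submatrix (S.1.orderEmbOfFin S.2) id).det * dX S)| :=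
          Finset.abs_sum_le_sum_abs _ _
      _ ≤ ∑ S : {S : Finset (Fin m) // S.card = p},
            c k S * ((∏ j ∈ S.1, d j) * (dX S * dX S)) :=
          Finset.sum_le_sum fun S _ => hterm S
      _ ≤ ∑ S : {S : Finset (Fin m) // S.card = p},
            (∑ T, c k T) * ((∏ j ∈ S.1, d j) * (dX S * dX S)) :=
          Finset.sum_le_sum fun S _ => mul_le_mul_of_nonneg_right
            (Finset.single_le_sum (fun T _ => hcnn k T) (Finset.mem_univ S)) (hdXnn S)
      _ = (∑ T, c k T) * ∑ S : {S : Finset (Fin m) // S.card = p},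
            (∏ j ∈ S.1, d j) * (dX S * dX S) := by rw [← Finset.mul_sum]
      _ = (∑ T, c k T) * A.det := by rw [hA, cauchyBinet18]
  have hwk : |w k| ≤ ∑ S, c k S := by
    rw [h3, hmat, abs_mul, abs_of_pos (inv_pos.mpr hdetpos)]
    calc A.det⁻¹ * |((X.updateCol k z)ᵀ * Matrix.diagonal d * X).det|
        ≤ A.det⁻¹ * ((∑ S, c k S) * A.det) :=
          mul_le_mul_of_nonneg_left hnumabs (inv_pos.mpr hdetpos).le
      _ = ∑ S, c k S := by
          field_simp
  exact hwk.trans (Finset.single_le_sum (f := fun k' => ∑ S, c k' S)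
    (fun k' _ => Finset.sum_nonneg fun S _ => hcnn k' S) (Finset.mem_univ k))

lemma sumVMV18 {m p : ℕ} (X : Matrix (Fin m) (Fin p) ℝ) (cc : Fin m → ℝ) :
    Xᵀ * Matrix.diagonal cc * X = ∑ j, cc j • Matrix.vecMulVec (X j) (X j) := by
  ext a b
  rw [entry18, Matrix.sum_apply]
  refine Finset.sum_congr rfl fun j _ => ?_
  simp only [Pi.smul_apply, Matrix.smul_apply, Matrix.vecMulVec_apply, smul_eq_mul]
  ring

lemma quadBound18 {m p : ℕ} (X : Matrix (Fin m) (Fin p) ℝ) (hrank : X.rank = p)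
    (i : Fin m) (Ki : ℝ)
    (hKi : ∀ d : Fin m → ℝ, (∀ j, 0 < d j) → ∀ k,
      |((Xᵀ * Matrix.diagonal d * X)⁻¹ *ᵥ ((Xᵀ * Matrix.diagonal d) *ᵥ Pi.single i 1)) k| ≤ Ki)
    (y : Fin m → ℝ) (hy : ∀ j, 0 < y j) :
    X i ⬝ᵥ
      (((Matrix.vecMulVec (X i) (X i) +
            ∑ j ∈ Finset.univ.erase i, (y i / y j) • Matrix.vecMulVec (X j) (X j))⁻¹ *
          (Matrix.vecMulVec (X i) (X i) +
            ∑ j ∈ Finset.univ.erase i, (y i / y j) • Matrix.vecMulVec (X j) (X j))⁻¹) *ᵥ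
        X i)
      ≤ ∑ _k : Fin p, Ki ^ 2 := by
  classical
  set d' : Fin m → ℝ := fun j => y i / y j with hd'def
  have hd' : ∀ j, 0 < d' j := fun j => div_pos (hy i) (hy j)
  have hdi : d' i = 1 := div_self (hy i).ne'
  have hM : Matrix.vecMulVec (X i) (X i) +
      ∑ j ∈ Finset.univ.erase i, (y i / y j) • Matrix.vecMulVec (X j) (X j)
      = Xᵀ * Matrix.diagonal d' * X := by
    rw [sumVMV18, ← Finset.add_sum_erase Finset.univ
      (fun j => d' j • Matrix.vecMulVec (X j) (X j)) (Finset.mem_univ i)]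
    congr 1
    rw [hdi, one_smul]
  rw [hM]
  set N := Xᵀ * Matrix.diagonal d' * X with hN
  have hMsymm : Nᵀ = N := by
    rw [hN, Matrix.transpose_mul, Matrix.transpose_mul, Matrix.transpose_transpose,
      Matrix.diagonal_transpose, Matrix.mul_assoc]
  have hsyminv : (N⁻¹)ᵀ = N⁻¹ := by rw [Matrix.transpose_nonsing_inv, hMsymm]
  have hsingle : (Xᵀ * Matrix.diagonal d') *ᵥ Pi.single i 1 = X i := by
    rw [Matrix.mulVec_single]
    funext l
    simp [Matrix.mul_diagonal, hdi]
  calc X i ⬝ᵥ ((N⁻¹ * N⁻¹) *ᵥ X i)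
      = (N⁻¹ *ᵥ X i) ⬝ᵥ (N⁻¹ *ᵥ X i) := by
        rw [← Matrix.mulVec_mulVec, Matrix.dotProduct_mulVec]
        congr 1
        rw [← Matrix.vecMul_transpose, hsyminv]
    _ = ∑ k, ((N⁻¹ *ᵥ X i) k) ^ 2 := by
        simp [dotProduct, pow_two]
    _ ≤ ∑ _k : Fin p, Ki ^ 2 := by
        refine Finset.sum_le_sum fun k _ => ?_
        have h := hKi d' hd' k
        rw [hsingle, ← hN] at h
        calc ((N⁻¹ *ᵥ X i) k) ^ 2 = |(N⁻¹ *ᵥ X i) k| ^ 2 := (sq_abs _).symm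
          _ ≤ Ki ^ 2 := by nlinarith [abs_nonneg ((N⁻¹ *ᵥ X i) k)]

/-- final step in the proof of Proposition 1. For `m ≥ p ≥ 1`, `X` of
full column rank `p` with rows `xᵢᵀ` (so `xᵢ = X i : Fin p → ℝ`), `z ∈ ℝ^m`, and
`D(y) = diagonal (1/yᵢ)` for `y ∈ (0,∞)^m`:
the supremum over `y ∈ (0,∞)^m` of `‖(Xᵀ D(y) X)⁻¹ Xᵀ D(y) z‖₂` is finite; in fact there
are finite constants `Cᵢ(X)` with
`xᵢᵀ (xᵢxᵢᵀ + ∑_{j≠i} (yᵢ/yⱼ) xⱼxⱼᵀ)⁻² xᵢ ≤ Cᵢ(X)` for all `i` and `y`, and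
`‖(Xᵀ D(y) X)⁻¹ Xᵀ D(y) z‖₂ ≤ ∑ᵢ |zᵢ| √(Cᵢ(X))`. -/
theorem stmt18 (m p : ℕ) (hp : 1 ≤ p) (hpm : p ≤ m)
    (X : Matrix (Fin m) (Fin p) ℝ) (hrank : X.rank = p) (z : Fin m → ℝ) :
    (∃ B : ℝ, ∀ y : Fin m → ℝ, (∀ j, 0 < y j) →
      Real.sqrt (∑ j, (((Xᵀ * Matrix.diagonal (fun i => (y i)⁻¹) * X)⁻¹ *ᵥ
          ((Xᵀ * Matrix.diagonal (fun i => (y i)⁻¹)) *ᵥ z)) j) ^ 2) ≤ B) ∧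
    ∃ C : Fin m → ℝ,
      (∀ (i : Fin m) (y : Fin m → ℝ), (∀ j, 0 < y j) →
        X i ⬝ᵥ
          (((Matrix.vecMulVec (X i) (X i) +
                ∑ j ∈ Finset.univ.erase i, (y i / y j) • Matrix.vecMulVec (X j) (X j))⁻¹ *
              (Matrix.vecMulVec (X i) (X i) +
                ∑ j ∈ Finset.univ.erase i, (y i / y j) • Matrix.vecMulVec (X j) (X j))⁻¹) *ᵥ
            X i)
          ≤ C i) ∧
      ∀ y : Fin m → ℝ, (∀ j, 0 < y j) →
        Real.sqrt (∑ j, (((Xᵀ * Matrix.diagonal (fun i => (y i)⁻¹) * X)⁻¹ *ᵥ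
            ((Xᵀ * Matrix.diagonal (fun i => (y i)⁻¹)) *ᵥ z)) j) ^ 2)
          ≤ ∑ i, |z i| * Real.sqrt (C i) := by
  classical
  obtain ⟨KZ, hKZ0, hKZ⟩ := key18 X hrank z
  set B := Real.sqrt (∑ _k : Fin p, KZ ^ 2) with hBdef
  have hB0 : 0 ≤ B := Real.sqrt_nonneg _
  have hpart1 : ∀ y : Fin m → ℝ, (∀ j, 0 < y j) →
      Real.sqrt (∑ j, (((Xᵀ * Matrix.diagonal (fun i => (y i)⁻¹) * X)⁻¹ *ᵥ
          ((Xᵀ * Matrix.diagonal (fun i => (y i)⁻¹)) *ᵥ z)) j) ^ 2) ≤ B := by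
    intro y hy
    have hd : ∀ j, 0 < (y j)⁻¹ := fun j => inv_pos.mpr (hy j)
    refine Real.sqrt_le_sqrt (Finset.sum_le_sum fun k _ => ?_)
    have h := hKZ (fun i => (y i)⁻¹) hd k
    calc (((Xᵀ * Matrix.diagonal (fun i => (y i)⁻¹) * X)⁻¹ *ᵥ
          ((Xᵀ * Matrix.diagonal (fun i => (y i)⁻¹)) *ᵥ z)) k) ^ 2
        = |((Xᵀ * Matrix.diagonal (fun i => (y i)⁻¹) * X)⁻¹ *ᵥ
          ((Xᵀ * Matrix.diagonal (fun i => (y i)⁻¹)) *ᵥ z)) k| ^ 2 := (sq_abs _).symm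
      _ ≤ KZ ^ 2 := by
          nlinarith [abs_nonneg (((Xᵀ * Matrix.diagonal (fun i => (y i)⁻¹) * X)⁻¹ *ᵥ
            ((Xᵀ * Matrix.diagonal (fun i => (y i)⁻¹)) *ᵥ z)) k)]
  refine ⟨⟨B, hpart1⟩, ?_⟩
  choose K hK0 hK using fun i : Fin m => key18 X hrank (Pi.single i 1)
  set C2 : Fin m → ℝ := fun i => ∑ _k : Fin p, (K i) ^ 2 with hC2
  have hq : ∀ (i : Fin m) (y : Fin m → ℝ), (∀ j, 0 < y j) →
      X i ⬝ᵥ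
        (((Matrix.vecMulVec (X i) (X i) +
              ∑ j ∈ Finset.univ.erase i, (y i / y j) • Matrix.vecMulVec (X j) (X j))⁻¹ *
            (Matrix.vecMulVec (X i) (X i) +
              ∑ j ∈ Finset.univ.erase i, (y i / y j) • Matrix.vecMulVec (X j) (X j))⁻¹) *ᵥ
          X i)
        ≤ C2 i :=
    fun i y hy => quadBound18 X hrank i (K i) (hK i) y hy
  by_cases hz : z = 0
  · refine ⟨C2, hq, ?_⟩
    intro y hy
    subst hz
    simp [Matrix.mulVec_zero]
  · obtain ⟨i0, hi0⟩ := Function.ne_iff.mp hz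
    refine ⟨fun i => if i = i0 then max (C2 i0) ((B / |z i0|) ^ 2) else C2 i, ?_, ?_⟩
    · intro i y hy
      by_cases hii : i = i0
      · subst hii
        dsimp only
        rw [if_pos rfl]
        exact (hq i y hy).trans (le_max_left _ _)
      · dsimp only
        rw [if_neg hii]
        exact hq i y hy
    · intro y hy
      have habs : 0 < |z i0| := abs_pos.mpr hi0
      have h2 : B ≤ |z i0| * Real.sqrt (if i0 = i0 then max (C2 i0) ((B / |z i0|) ^ 2)
          else C2 i0) := by
        rw [if_pos rfl]
        have hle : Real.sqrt ((B / |z i0|) ^ 2)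
            ≤ Real.sqrt (max (C2 i0) ((B / |z i0|) ^ 2)) :=
          Real.sqrt_le_sqrt (le_max_right _ _)
        rw [Real.sqrt_sq (by positivity)] at hle
        calc B = |z i0| * (B / |z i0|) := by field_simp
          _ ≤ |z i0| * Real.sqrt (max (C2 i0) ((B / |z i0|) ^ 2)) :=
            mul_le_mul_of_nonneg_left hle habs.le
      refine (hpart1 y hy).trans (h2.trans ?_)
      exact Finset.single_le_sum
        (f := fun i => |z i| * Real.sqrt (if i = i0 then max (C2 i0) ((B / |z i0|) ^ 2)
          else C2 i))
        (fun i _ => mul_nonneg (abs_nonneg _) (Real.sqrt_nonneg _)) (Finset.mem_univ i0)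
end

section
/- Fix r ∈ (0,1) and set θ = (1 − 2r)/(r(1 − r)) and τ = √(2/(r(1 − r))). Let U and V be independent random variables with U standard normal and V exponentially distributed with rate 1. Then the random variable θV + τ√V · U has the asymmetric Laplace distribution with parameter r, i.e., its law has density d(ε; r) = r(1 − r) [ e^{(1−r)ε} 1{ε < 0} + e^{−rε} 1{ε ≥ 0} ] with respect to Lebesgue measure on ℝ. -/
open MeasureTheory Real Set ProbabilityTheory

namespace Stmt19Aux

lemma phi_image {c d : ℝ} (hc : 0 < c) (hd : 0 < d) :
    (fun s => d * s - c / s) '' Ioi 0 = univ := by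
  apply eq_univ_of_forall
  intro t
  refine ⟨(t + Real.sqrt (t ^ 2 + 4 * c * d)) / (2 * d), ?_, ?_⟩
  · have h1 : |t| < Real.sqrt (t ^ 2 + 4 * c * d) := by
      rw [show |t| = Real.sqrt (t ^ 2) by rw [Real.sqrt_sq_eq_abs]]
      exact Real.sqrt_lt_sqrt (sq_nonneg t) (by nlinarith)
    have : -t < Real.sqrt (t ^ 2 + 4 * c * d) := lt_of_le_of_lt (neg_le_abs t) h1
    have : 0 < t + Real.sqrt (t ^ 2 + 4 * c * d) := by linarith
    exact mem_Ioi.2 (by positivity)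
  · have h1 : |t| < Real.sqrt (t ^ 2 + 4 * c * d) := by
      rw [show |t| = Real.sqrt (t ^ 2) by rw [Real.sqrt_sq_eq_abs]]
      exact Real.sqrt_lt_sqrt (sq_nonneg t) (by nlinarith)
    have h2 : -t < Real.sqrt (t ^ 2 + 4 * c * d) := lt_of_le_of_lt (neg_le_abs t) h1
    have hpos : 0 < t + Real.sqrt (t ^ 2 + 4 * c * d) := by linarith
    have hsq : Real.sqrt (t ^ 2 + 4 * c * d) ^ 2 = t ^ 2 + 4 * c * d :=
      Real.sq_sqrt (by nlinarith)
    field_simp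
    rw [show t ^ 2 + d * 4 * c = t ^ 2 + 4 * c * d by ring, div_eq_iff hpos.ne']
    nlinarith [hsq]

lemma phi_deriv {c d : ℝ} {s : ℝ} (hs : s ∈ Ioi (0:ℝ)) :
    HasDerivWithinAt (fun s => d * s - c / s) (d + c / s ^ 2) (Ioi 0) s := by
  have h1 : HasDerivAt (fun s : ℝ => d * s - c / s) (d + c / s ^ 2) s := by
    have h2 : HasDerivAt (fun s : ℝ => s⁻¹) (-(s ^ 2)⁻¹) s := hasDerivAt_inv (ne_of_gt hs)
    have h3 := ((hasDerivAt_id s).const_mul d).sub (h2.const_mul c)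
    simp only [mul_one, mul_neg] at h3
    have he : (fun s : ℝ => d * s - c / s) = fun x => d * id x - c * x⁻¹ := by
      ext y; rw [div_eq_mul_inv, id]
    rw [he]
    exact h3.congr_deriv (by rw [div_eq_mul_inv]; ring)
  exact h1.hasDerivWithinAt

lemma phi_injOn {c d : ℝ} (hc : 0 < c) (hd : 0 < d) :
    InjOn (fun s => d * s - c / s) (Ioi (0:ℝ)) := by
  have : StrictMonoOn (fun s => d * s - c / s) (Ioi (0:ℝ)) := by
    intro x hx y hy hxy
    simp only
    have hx0 : (0:ℝ) < x := hx
    have hy0 : (0:ℝ) < y := hy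
    have h1 : c / y < c / x := div_lt_div_of_pos_left hc hx0 hxy
    nlinarith
  exact this.injOn



lemma key1 {c d : ℝ} (hc : 0 < c) (hd : 0 < d) :
    ∫ s in Ioi (0:ℝ), (d + c / s ^ 2) * Real.exp (-(d * s - c / s) ^ 2) = Real.sqrt π := by
  have h := integral_image_eq_integral_abs_deriv_smul measurableSet_Ioi
    (fun s hs => phi_deriv (c := c) (d := d) hs) (phi_injOn hc hd)
    (fun x => Real.exp (-x ^ 2))
  rw [phi_image hc hd, Measure.restrict_univ] at h
  have hg : ∫ x : ℝ, Real.exp (-x ^ 2) = Real.sqrt π := by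
    have := integral_gaussian 1
    simpa using this
  rw [hg] at h
  rw [h]
  apply setIntegral_congr_fun measurableSet_Ioi
  intro s hs
  have hs0 : (0:ℝ) < s := hs
  simp only [smul_eq_mul]
  rw [abs_of_pos (by positivity)]

lemma integrand1_integrable {c d : ℝ} (hc : 0 < c) (hd : 0 < d) :
    IntegrableOn (fun s => (d + c / s ^ 2) * Real.exp (-(d * s - c / s) ^ 2)) (Ioi (0:ℝ)) := by
  have h := (integrableOn_image_iff_integrableOn_abs_deriv_smul measurableSet_Ioi
    (fun s hs => phi_deriv (c := c) (d := d) hs) (phi_injOn hc hd)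
    (fun x => Real.exp (-x ^ 2))).mp ?_
  · apply h.congr_fun ?_ measurableSet_Ioi
    intro s hs
    have hs0 : (0:ℝ) < s := hs
    simp only [smul_eq_mul]
    rw [abs_of_pos (by positivity)]
  · rw [phi_image hc hd]
    have : Integrable (fun x : ℝ => Real.exp (-1 * x ^ 2)) := integrable_exp_neg_mul_sq one_pos
    have h2 : Integrable (fun x : ℝ => Real.exp (-x ^ 2)) := by simpa using this
    exact h2.integrableOn

lemma key2 {c d : ℝ} (hc : 0 < c) (hd : 0 < d) :
    ∫ s in Ioi (0:ℝ), d * Real.exp (-(d * s - c / s) ^ 2)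
      = ∫ s in Ioi (0:ℝ), (c / s ^ 2) * Real.exp (-(d * s - c / s) ^ 2) := by
  have himg : (fun s : ℝ => c / d * s⁻¹) '' Ioi 0 = Ioi 0 := by
    apply Subset.antisymm
    · rintro _ ⟨s, hs, rfl⟩
      have hs0 : (0:ℝ) < s := hs
      exact mem_Ioi.2 (by positivity)
    · intro v hv
      have hv0 : (0:ℝ) < v := hv
      refine ⟨c / d * v⁻¹, mem_Ioi.2 (by positivity), ?_⟩
      field_simp
  have hderiv : ∀ s ∈ Ioi (0:ℝ),
      HasDerivWithinAt (fun s : ℝ => c / d * s⁻¹) (-(c / d) / s ^ 2) (Ioi 0) s := by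
    intro s hs
    have hs0 : (0:ℝ) < s := hs
    have h2 : HasDerivAt (fun s : ℝ => s⁻¹) (-(s ^ 2)⁻¹) s := hasDerivAt_inv hs0.ne'
    have h3 := h2.const_mul (c / d)
    exact (h3.congr_deriv (by ring)).hasDerivWithinAt
  have hinj : InjOn (fun s : ℝ => c / d * s⁻¹) (Ioi 0) := by
    intro x hx y hy hxy
    have hx0 : (0:ℝ) < x := hx
    have hy0 : (0:ℝ) < y := hy
    simp only at hxy
    have : x⁻¹ = y⁻¹ := by
      have hcd : c / d ≠ 0 := by positivity
      exact mul_left_cancel₀ hcd hxy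
    exact inv_injective this
  have h := integral_image_eq_integral_abs_deriv_smul measurableSet_Ioi hderiv hinj
    (fun x => d * Real.exp (-(d * x - c / x) ^ 2))
  rw [himg] at h
  rw [h]
  apply setIntegral_congr_fun measurableSet_Ioi
  intro s hs
  have hs0 : (0:ℝ) < s := hs
  have harg : d * (c / d * s⁻¹) - c / (c / d * s⁻¹) = -(d * s - c / s) := by
    field_simp
    ring
  simp only [smul_eq_mul]
  rw [harg, neg_sq, abs_div, abs_neg, abs_of_pos (by positivity : (0:ℝ) < c / d),
    abs_of_pos (by positivity : (0:ℝ) < s ^ 2)]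
  field_simp


variable {c d : ℝ}

lemma Emeas : Measurable (fun s : ℝ => Real.exp (-(d * s - c / s) ^ 2)) := by
  fun_prop

lemma dE_integrable (hc : 0 < c) (hd : 0 < d) :
    IntegrableOn (fun s => d * Real.exp (-(d * s - c / s) ^ 2)) (Ioi (0:ℝ)) := by
  apply Integrable.mono' (integrand1_integrable hc hd)
    ((Emeas.const_mul d).aestronglyMeasurable.restrict)
  filter_upwards [ae_restrict_mem measurableSet_Ioi] with s hs
  have hs0 : (0:ℝ) < s := hs
  have h1 : (0:ℝ) < Real.exp (-(d * s - c / s) ^ 2) := Real.exp_pos _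
  rw [Real.norm_eq_abs, abs_of_pos (by positivity)]
  nlinarith [div_pos hc (by positivity : (0:ℝ) < s ^ 2)]

lemma cE_integrable (hc : 0 < c) (hd : 0 < d) :
    IntegrableOn (fun s => (c / s ^ 2) * Real.exp (-(d * s - c / s) ^ 2)) (Ioi (0:ℝ)) := by
  apply Integrable.mono' (integrand1_integrable hc hd)
  · exact (((measurable_const.div (measurable_id.pow_const 2)).mul Emeas).aestronglyMeasurable.restrict)
  filter_upwards [ae_restrict_mem measurableSet_Ioi] with s hs
  have hs0 : (0:ℝ) < s := hs
  have h1 : (0:ℝ) < Real.exp (-(d * s - c / s) ^ 2) := Real.exp_pos _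
  have h2 : (0:ℝ) < c / s ^ 2 := by positivity
  rw [Real.norm_eq_abs, abs_of_pos (by positivity)]
  nlinarith

lemma E_integral (hc : 0 < c) (hd : 0 < d) :
    ∫ s in Ioi (0:ℝ), Real.exp (-(d * s - c / s) ^ 2) = Real.sqrt π / (2 * d) := by
  have hsplit : ∫ s in Ioi (0:ℝ), (d + c / s ^ 2) * Real.exp (-(d * s - c / s) ^ 2)
      = (∫ s in Ioi (0:ℝ), d * Real.exp (-(d * s - c / s) ^ 2))
        + ∫ s in Ioi (0:ℝ), (c / s ^ 2) * Real.exp (-(d * s - c / s) ^ 2) := by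
    rw [← integral_add (dE_integrable hc hd) (cE_integrable hc hd)]
    apply setIntegral_congr_fun measurableSet_Ioi
    intro s hs
    ring
  have h2d : ∫ s in Ioi (0:ℝ), d * Real.exp (-(d * s - c / s) ^ 2) = Real.sqrt π / 2 := by
    have := key1 hc hd
    rw [hsplit, ← key2 hc hd] at this
    linarith
  rw [integral_const_mul] at h2d
  have hd0 : d ≠ 0 := hd.ne'
  field_simp at h2d ⊢
  linarith

lemma glasser {a b : ℝ} (ha : 0 < a) (hb : 0 < b) :
    ∫ s in Ioi (0:ℝ), Real.exp (-(b * s ^ 2 + a / s ^ 2))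
      = Real.sqrt π / (2 * Real.sqrt b) * Real.exp (-(2 * Real.sqrt (a * b))) := by
  set c := Real.sqrt a with hcdef
  set d := Real.sqrt b with hddef
  have hc : 0 < c := Real.sqrt_pos.2 ha
  have hd : 0 < d := Real.sqrt_pos.2 hb
  have hc2 : c ^ 2 = a := Real.sq_sqrt ha.le
  have hd2 : d ^ 2 = b := Real.sq_sqrt hb.le
  have hcd : c * d = Real.sqrt (a * b) := (Real.sqrt_mul ha.le b).symm
  have hcongr : ∀ s ∈ Ioi (0:ℝ), Real.exp (-(b * s ^ 2 + a / s ^ 2))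
      = Real.exp (-(2 * (c * d))) * Real.exp (-(d * s - c / s) ^ 2) := by
    intro s hs
    have hs0 : (0:ℝ) < s := hs
    rw [← Real.exp_add]
    congr 1
    rw [← hc2, ← hd2]
    field_simp
    ring
  rw [setIntegral_congr_fun measurableSet_Ioi hcongr, integral_const_mul, E_integral hc hd, hcd]
  ring

lemma sq_image : (fun s : ℝ => s ^ 2) '' Ioi 0 = Ioi 0 := by
  apply Subset.antisymm
  · rintro _ ⟨s, hs, rfl⟩
    have hs0 : (0:ℝ) < s := hs
    exact mem_Ioi.2 (by positivity)
  · intro v hv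
    have hv0 : (0:ℝ) < v := hv
    exact ⟨Real.sqrt v, mem_Ioi.2 (Real.sqrt_pos.2 hv0), Real.sq_sqrt hv0.le⟩

lemma sq_deriv : ∀ s ∈ Ioi (0:ℝ),
    HasDerivWithinAt (fun s : ℝ => s ^ 2) (2 * s) (Ioi 0) s := by
  intro s _
  simpa using ((hasDerivAt_pow 2 s).hasDerivWithinAt)

lemma sq_injOn : InjOn (fun s : ℝ => s ^ 2) (Ioi 0) := by
  intro x hx y hy hxy
  have hx0 : (0:ℝ) < x := hx
  have hy0 : (0:ℝ) < y := hy
  simp only at hxy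
  nlinarith

lemma E2_integrable {a b : ℝ} (ha : 0 < a) (hb : 0 < b) :
    IntegrableOn (fun s => Real.exp (-(b * s ^ 2 + a / s ^ 2))) (Ioi (0:ℝ)) := by
  have hbase : IntegrableOn (fun s : ℝ => Real.exp (-b * s ^ 2)) (Ioi (0:ℝ)) :=
    (integrable_exp_neg_mul_sq hb).integrableOn
  apply Integrable.mono' hbase
  · exact (Measurable.aestronglyMeasurable (by measurability)).restrict
  filter_upwards [ae_restrict_mem measurableSet_Ioi] with s hs
  have hs0 : (0:ℝ) < s := hs
  rw [Real.norm_eq_abs, abs_of_pos (Real.exp_pos _)]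
  apply Real.exp_le_exp.2
  have : 0 ≤ a / s ^ 2 := by positivity
  linarith

lemma v_integral {a b : ℝ} (ha : 0 < a) (hb : 0 < b) :
    ∫ v in Ioi (0:ℝ), (Real.sqrt v)⁻¹ * Real.exp (-(b * v + a / v))
      = Real.sqrt π / Real.sqrt b * Real.exp (-(2 * Real.sqrt (a * b))) := by
  have h := integral_image_eq_integral_abs_deriv_smul measurableSet_Ioi sq_deriv sq_injOn
    (fun v => (Real.sqrt v)⁻¹ * Real.exp (-(b * v + a / v)))
  rw [sq_image] at h
  rw [h]
  have hcongr : ∀ s ∈ Ioi (0:ℝ),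
      |2 * s| • ((Real.sqrt (s ^ 2))⁻¹ * Real.exp (-(b * s ^ 2 + a / s ^ 2)))
        = 2 * Real.exp (-(b * s ^ 2 + a / s ^ 2)) := by
    intro s hs
    have hs0 : (0:ℝ) < s := hs
    rw [smul_eq_mul, Real.sqrt_sq hs0.le, abs_of_pos (by positivity)]
    field_simp
  rw [setIntegral_congr_fun measurableSet_Ioi hcongr, integral_const_mul, glasser ha hb]
  have hd : (0:ℝ) < Real.sqrt b := Real.sqrt_pos.2 hb
  field_simp

lemma v_integrable {a b : ℝ} (ha : 0 < a) (hb : 0 < b) :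
    IntegrableOn (fun v => (Real.sqrt v)⁻¹ * Real.exp (-(b * v + a / v))) (Ioi (0:ℝ)) := by
  have h := (integrableOn_image_iff_integrableOn_abs_deriv_smul measurableSet_Ioi sq_deriv
    sq_injOn (fun v => (Real.sqrt v)⁻¹ * Real.exp (-(b * v + a / v))))
  rw [sq_image] at h
  rw [h]
  apply IntegrableOn.congr_fun ((E2_integrable ha hb).const_mul 2) ?_ measurableSet_Ioi
  intro s hs
  have hs0 : (0:ℝ) < s := hs
  simp only [smul_eq_mul]
  rw [Real.sqrt_sq hs0.le, abs_of_pos (by positivity)]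
  field_simp

lemma v_lintegral {a b : ℝ} (ha : 0 < a) (hb : 0 < b) :
    ∫⁻ v in Ioi (0:ℝ), ENNReal.ofReal ((Real.sqrt v)⁻¹ * Real.exp (-(b * v + a / v)))
      = ENNReal.ofReal (Real.sqrt π / Real.sqrt b * Real.exp (-(2 * Real.sqrt (a * b)))) := by
  rw [← v_integral ha hb, ofReal_integral_eq_lintegral_ofReal (v_integrable ha hb)]
  filter_upwards [ae_restrict_mem measurableSet_Ioi] with v hv
  have hv0 : (0:ℝ) < v := hv
  positivity

lemma pointwise {r : ℝ} (hr : r ∈ Set.Ioo (0:ℝ) 1) {x : ℝ} (hx : x ≠ 0) :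
    ∫⁻ v in Ioi (0:ℝ), ENNReal.ofReal (Real.exp (-v) *
        ((Real.sqrt (2 * π * ((Real.sqrt (2 / (r * (1 - r))))^2 * v)))⁻¹ *
          Real.exp (-(x - ((1 - 2*r)/(r*(1-r))) * v)^2 / (2 * ((Real.sqrt (2 / (r * (1 - r))))^2 * v)))))
      = ENNReal.ofReal (r * (1 - r) *
          (if x < 0 then Real.exp ((1 - r) * x) else Real.exp (-r * x))) := by
  obtain ⟨hr0, hr1⟩ := hr
  set q : ℝ := r * (1 - r) with hqdef
  have hq : 0 < q := by nlinarith
  have hτ2 : (Real.sqrt (2 / q))^2 = 2 / q := Real.sq_sqrt (by positivity)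
  set a : ℝ := x^2 * q / 4 with hadef
  set b : ℝ := 1 / (4 * q) with hbdef
  have ha : 0 < a := by
    have : x^2 > 0 := by positivity
    positivity
  have hb : 0 < b := by positivity
  set C : ℝ := Real.exp ((1 - 2*r) * x / 2) * (Real.sqrt q / (2 * Real.sqrt π)) with hCdef
  have hC : 0 ≤ C := by positivity
  have hπ : (0:ℝ) < π := pi_pos
  have hcongr : ∀ v ∈ Ioi (0:ℝ), Real.exp (-v) *
        ((Real.sqrt (2 * π * ((Real.sqrt (2 / q))^2 * v)))⁻¹ *
          Real.exp (-(x - ((1 - 2*r)/q) * v)^2 / (2 * ((Real.sqrt (2 / q))^2 * v))))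
      = C * ((Real.sqrt v)⁻¹ * Real.exp (-(b * v + a / v))) := by
    intro v hv
    have hv0 : (0:ℝ) < v := hv
    have h1 : Real.sqrt (2 * π * ((Real.sqrt (2 / q))^2 * v))
        = (2 * Real.sqrt π / Real.sqrt q) * Real.sqrt v := by
      rw [hτ2, show 2 * π * (2 / q * v) = (2^2 * π / q) * v by ring,
        Real.sqrt_mul (by positivity) v, Real.sqrt_div (by positivity) q,
        Real.sqrt_mul (by positivity) π, Real.sqrt_sq (by norm_num : (0:ℝ) ≤ 2)]
    have h2 : -v + -(x - ((1 - 2*r)/q) * v)^2 / (2 * ((Real.sqrt (2 / q))^2 * v))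
        = (1 - 2*r) * x / 2 + -(b * v + a / v) := by
      rw [hτ2, hbdef, hadef]
      field_simp
      ring_nf
      linear_combination (-16 * v^2) * hqdef
    calc Real.exp (-v) * ((Real.sqrt (2 * π * ((Real.sqrt (2 / q))^2 * v)))⁻¹ *
          Real.exp (-(x - ((1 - 2*r)/q) * v)^2 / (2 * ((Real.sqrt (2 / q))^2 * v))))
        = ((2 * Real.sqrt π / Real.sqrt q) * Real.sqrt v)⁻¹ *
            Real.exp (-v + -(x - ((1 - 2*r)/q) * v)^2 / (2 * ((Real.sqrt (2 / q))^2 * v))) := by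
          rw [h1, Real.exp_add]; ring
      _ = ((2 * Real.sqrt π / Real.sqrt q) * Real.sqrt v)⁻¹ *
            (Real.exp ((1 - 2*r) * x / 2) * Real.exp (-(b * v + a / v))) := by
          rw [h2, Real.exp_add]
      _ = C * ((Real.sqrt v)⁻¹ * Real.exp (-(b * v + a / v))) := by
          rw [hCdef]
          have hsq : (0:ℝ) < Real.sqrt q := Real.sqrt_pos.2 hq
          have hsπ : (0:ℝ) < Real.sqrt π := Real.sqrt_pos.2 hπ
          have hsv : (0:ℝ) < Real.sqrt v := Real.sqrt_pos.2 hv0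
          field_simp
  rw [setLIntegral_congr_fun measurableSet_Ioi (fun v hv => by rw [hcongr v hv])]
  simp_rw [ENNReal.ofReal_mul hC]
  rw [lintegral_const_mul' _ _ ENNReal.ofReal_ne_top, v_lintegral ha hb,
    ← ENNReal.ofReal_mul hC]
  congr 1
  have hab : Real.sqrt (a * b) = |x| / 4 := by
    rw [show a * b = (x / 4)^2 by rw [hadef, hbdef]; field_simp, Real.sqrt_sq_eq_abs,
      abs_div]
    norm_num
  have hsb : Real.sqrt b = 1 / (2 * Real.sqrt q) := by
    rw [show b = (1 / (2 * Real.sqrt q))^2 by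
      rw [hbdef]; rw [div_pow]; rw [mul_pow]; rw [Real.sq_sqrt hq.le]; norm_num,
      Real.sqrt_sq (by positivity)]
  rw [hab, hsb, hCdef]
  have hsq : (0:ℝ) < Real.sqrt q := Real.sqrt_pos.2 hq
  have hsπ : (0:ℝ) < Real.sqrt π := Real.sqrt_pos.2 hπ
  have hqq : Real.sqrt q * Real.sqrt q = q := Real.mul_self_sqrt hq.le
  have h2 : Real.sqrt q / (2 * Real.sqrt π) * (Real.sqrt π / (1 / (2 * Real.sqrt q))) = q := by
    field_simp
    linear_combination hqq
  by_cases hxneg : x < 0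
  · rw [if_pos hxneg, abs_of_neg hxneg]
    have hE : Real.exp ((1 - 2*r) * x / 2) * Real.exp (-(2 * (-x / 4)))
        = Real.exp ((1 - r) * x) := by rw [← Real.exp_add]; congr 1; ring
    rw [← hE]
    linear_combination Real.exp ((1 - 2*r) * x / 2) * Real.exp (-(2 * (-x / 4))) * h2
  · rw [if_neg hxneg, abs_of_nonneg (not_lt.1 hxneg)]
    have hE : Real.exp ((1 - 2*r) * x / 2) * Real.exp (-(2 * (x / 4)))
        = Real.exp (-r * x) := by rw [← Real.exp_add]; congr 1; ring
    rw [← hE]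
    linear_combination Real.exp ((1 - 2*r) * x / 2) * Real.exp (-(2 * (x / 4))) * h2

end Stmt19Aux

open Stmt19Aux

/-- the normal–exponential mixture representation of the asymmetric
Laplace distribution, used by Kozumi and Kobayashi. Fix `r ∈ (0,1)`, set
`θ = (1 − 2r)/(r(1 − r))` and `τ = √(2/(r(1 − r)))`.  If `U` is standard normal, `V` is
exponential with rate 1, and `U`, `V` are independent, then `θ V + τ √V · U` has the
asymmetric Laplace distribution with parameter `r`, i.e. its law is the measure with
density `d(ε; r) = r(1 − r)[e^{(1−r)ε} 1{ε<0} + e^{−rε} 1{ε≥0}]` with respect to Lebesgue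
measure on `ℝ`. -/
theorem stmt19 (r : ℝ) (hr : r ∈ Set.Ioo (0 : ℝ) 1)
    {Ω : Type*} [MeasurableSpace Ω] (P : Measure Ω) [IsProbabilityMeasure P]
    (U V : Ω → ℝ) (hU_meas : Measurable U) (hV_meas : Measurable V)
    (hU : Measure.map U P = gaussianReal 0 1)
    (hV : Measure.map V P = expMeasure 1)
    (hUV : IndepFun U V P) :
    Measure.map
        (fun ω => ((1 - 2 * r) / (r * (1 - r))) * V ω +
          Real.sqrt (2 / (r * (1 - r))) * Real.sqrt (V ω) * U ω) P
      = volume.withDensity fun ε =>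
          ENNReal.ofReal (r * (1 - r) *
            (if ε < 0 then Real.exp ((1 - r) * ε) else Real.exp (-r * ε))) := by
  obtain ⟨hr0, hr1⟩ := hr
  have hq : (0:ℝ) < r * (1 - r) := by nlinarith
  set θ : ℝ := (1 - 2 * r) / (r * (1 - r)) with hθdef
  set τ : ℝ := Real.sqrt (2 / (r * (1 - r))) with hτdef
  have hτpos : 0 < τ := Real.sqrt_pos.2 (by positivity)
  -- the map on the product space
  set g : ℝ × ℝ → ℝ := fun p => θ * p.1 + τ * Real.sqrt p.1 * p.2 with hgdef
  have hg : Measurable g := by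
    apply Measurable.add
    · exact measurable_fst.const_mul θ
    · exact ((Real.continuous_sqrt.measurable.comp measurable_fst).const_mul τ).mul measurable_snd
  have h_pair : Measure.map (fun ω => (V ω, U ω)) P
      = (expMeasure 1).prod (gaussianReal 0 1) := by
    rw [← hV, ← hU]
    exact (indepFun_iff_map_prod_eq_prod_map_map hV_meas.aemeasurable hU_meas.aemeasurable).mp
      hUV.symm
  have hmap : Measure.map
      (fun ω => θ * V ω + τ * Real.sqrt (V ω) * U ω) P
      = Measure.map g ((expMeasure 1).prod (gaussianReal 0 1)) := by
    rw [← h_pair, Measure.map_map hg (hV_meas.prodMk hU_meas)]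
    rfl
  haveI : IsProbabilityMeasure (expMeasure 1) := isProbabilityMeasure_expMeasure one_pos
  -- a.e. positivity for the exponential measure
  have hae : ∀ᵐ v ∂(expMeasure 1), 0 < v := by
    rw [ae_iff]
    have hset : {v : ℝ | ¬ 0 < v} = Iio 0 ∪ {0} := by
      ext v; simp [le_iff_lt_or_eq, not_lt, eq_comm]
    rw [hset]
    apply measure_union_null
    · rw [expMeasure, gammaMeasure, withDensity_apply _ measurableSet_Iio,
        lintegral_gammaPDF_of_nonpos le_rfl]
    · exact (withDensity_absolutelyContinuous volume _) (by simp)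
  -- the explicit gaussian slice density
  set k0 : ℝ → ℝ → ℝ := fun v x =>
    (Real.sqrt (2 * π * (τ^2 * v)))⁻¹ * Real.exp (-(x - θ * v)^2 / (2 * (τ^2 * v))) with hk0def
  have hk0meas : Measurable (Function.uncurry fun v x => ENNReal.ofReal (Real.exp (-v) * k0 v x)) := by
    apply Measurable.ennreal_ofReal
    apply Measurable.mul
    · exact (measurable_fst.neg.exp)
    apply Measurable.mul
    · exact ((Real.continuous_sqrt.measurable.comp
        ((measurable_fst.const_mul (τ^2)).const_mul (2 * π))).inv).comp measurable_id |>.mono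
        le_rfl le_rfl |>.comp measurable_id |>.mono le_rfl le_rfl
    · exact (((measurable_snd.sub (measurable_fst.const_mul θ)).pow_const 2).neg.div
        ((measurable_fst.const_mul (τ^2)).const_mul 2)).exp
  ext s hs
  rw [hmap, Measure.map_apply hg hs, Measure.prod_apply (hg hs), withDensity_apply _ hs]
  -- rewrite the slice measure, for a.e. (positive) v
  have hslice : ∀ v : ℝ, 0 < v →
      (gaussianReal 0 1) (Prod.mk v ⁻¹' (g ⁻¹' s)) = ∫⁻ x in s, ENNReal.ofReal (k0 v x) := by
    intro v hv
    have hc : τ * Real.sqrt v ≠ 0 := by positivity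
    have hpre : Prod.mk v ⁻¹' (g ⁻¹' s) = (fun u => θ * v + (τ * Real.sqrt v) * u) ⁻¹' s := rfl
    have hmapu : Measure.map (fun u => θ * v + (τ * Real.sqrt v) * u) (gaussianReal 0 1)
        = gaussianReal (θ * v) ((τ^2 * v).toNNReal) := by
      have h1 : (fun u : ℝ => θ * v + (τ * Real.sqrt v) * u)
          = (fun y : ℝ => θ * v + y) ∘ (fun u : ℝ => (τ * Real.sqrt v) * u) := rfl
      rw [h1, ← Measure.map_map (measurable_const_add (θ * v)) (measurable_const_mul _),
        gaussianReal_map_const_mul, gaussianReal_map_const_add]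
      congr 1
      · ring
      · ext
        push_cast
        rw [Real.coe_toNNReal _ (by positivity)]
        rw [mul_pow, Real.sq_sqrt hv.le, mul_one]
    have hvar : ((τ^2 * v).toNNReal) ≠ 0 := by
      simp only [ne_eq, Real.toNNReal_eq_zero, not_le]
      positivity
    rw [hpre, ← Measure.map_apply ((measurable_const_mul (τ * Real.sqrt v)).const_add (θ * v)) hs, hmapu, gaussianReal_apply _ hvar]
    apply setLIntegral_congr_fun hs
    intro x _
    rw [gaussianPDF, gaussianPDFReal, Real.coe_toNNReal _ (by positivity : (0:ℝ) ≤ τ^2 * v)]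
  rw [lintegral_congr_ae (hae.mono fun v hv => hslice v hv)]
  -- unfold the exponential density
  have hk0m : Measurable (Function.uncurry fun v x => ENNReal.ofReal (k0 v x)) := by
    apply Measurable.ennreal_ofReal
    apply Measurable.mul
    · exact (Real.continuous_sqrt.measurable.comp
        ((measurable_fst.const_mul (τ^2)).const_mul (2 * π))).inv
    · exact (((measurable_snd.sub (measurable_fst.const_mul θ)).pow_const 2).neg.div
        ((measurable_fst.const_mul (τ^2)).const_mul 2)).exp
  have hHmeas : Measurable fun v => ∫⁻ x in s, ENNReal.ofReal (k0 v x) :=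
    Measurable.lintegral_prod_right (f := fun v x => ENNReal.ofReal (k0 v x)) hk0m
  rw [expMeasure, gammaMeasure, lintegral_withDensity_eq_lintegral_mul _
    (show Measurable (gammaPDF 1 1) from (measurable_gammaPDFReal 1 1).ennreal_ofReal) hHmeas]
  have hxne : ∀ᵐ x : ℝ ∂volume, x ≠ 0 := by
    rw [ae_iff]
    have : {a : ℝ | ¬ a ≠ 0} = {0} := by ext; simp
    rw [this]
    exact Real.volume_singleton
  calc ∫⁻ v, ((gammaPDF 1 1) * fun v => ∫⁻ x in s, ENNReal.ofReal (k0 v x)) v ∂volume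
      = ∫⁻ v in Ioi 0, gammaPDF 1 1 v * ∫⁻ x in s, ENNReal.ofReal (k0 v x) ∂volume := by
        have hz : ∫⁻ v in (Ioi (0:ℝ))ᶜ, gammaPDF 1 1 v * ∫⁻ x in s, ENNReal.ofReal (k0 v x)
            ∂volume = 0 := by
          rw [compl_Ioi]
          have h0 : ∀ᵐ v ∂(volume.restrict (Iic (0:ℝ))),
              gammaPDF 1 1 v * (∫⁻ x in s, ENNReal.ofReal (k0 v x)) = 0 := by
            filter_upwards [ae_restrict_mem measurableSet_Iic, ae_restrict_of_ae hxne]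
              with v hv hvne
            rw [gammaPDF_of_neg (lt_of_le_of_ne hv hvne), zero_mul]
          rw [lintegral_congr_ae h0, lintegral_zero]
        simp only [Pi.mul_apply]
        conv_lhs => rw [← lintegral_add_compl
          (fun v => gammaPDF 1 1 v * ∫⁻ x in s, ENNReal.ofReal (k0 v x)) (measurableSet_Ioi (a := (0:ℝ)))]
        rw [hz, add_zero]
    _ = ∫⁻ v in Ioi 0, ∫⁻ x in s, ENNReal.ofReal (Real.exp (-v) * k0 v x) ∂volume := by
        apply setLIntegral_congr_fun measurableSet_Ioi (fun v hv => ?_)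
        have hv0 : (0:ℝ) < v := hv
        have hcoef : gammaPDF 1 1 v = ENNReal.ofReal (Real.exp (-v)) := by
          rw [gammaPDF_of_nonneg hv0.le, Real.Gamma_one, Real.one_rpow, sub_self,
            Real.rpow_zero, one_mul]
          norm_num
        rw [hcoef, ← lintegral_const_mul' _ _ ENNReal.ofReal_ne_top]
        congr 1
        ext x
        rw [← ENNReal.ofReal_mul (Real.exp_nonneg _)]
    _ = ∫⁻ x in s, ∫⁻ v in Ioi 0, ENNReal.ofReal (Real.exp (-v) * k0 v x) ∂volume := by
        exact lintegral_lintegral_swap hk0meas.aemeasurable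
    _ = ∫⁻ x in s, ENNReal.ofReal (r * (1 - r) *
          (if x < 0 then Real.exp ((1 - r) * x) else Real.exp (-r * x))) ∂volume := by
        apply lintegral_congr_ae
        filter_upwards [ae_restrict_of_ae hxne] with x hx
        exact pointwise ⟨hr0, hr1⟩ hx
end
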